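/- arXiv:1711.05933 — 3 statements merged into one kernel-verified Lean document; each statement's English description precedes it below -/
import Mathlib

section
/- There is an injective homomorphism Hom(Z, D) ⊕ Hom(H/A ⊗ K/A, D) → H²(G, D) whose image equals the kernel of the map (res, res) : H²(G, D) → H²(H, D) ⊕ H²(K, D) given by the two restriction homomorphisms. In particular, Hom(Z, D) ⊕ Hom(H/A ⊗ K/A, D) embeds into H²(G, D). -/
/-!
Setting (central products): `G` is a group with normal subgroups `H` and `K` such that
`G = HK` (i.e. `H ⊔ K = ⊤`) and `[H, K] = 1` (i.e. every element of `H` commutes with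
every element of `K`).  We set `A = H ⊓ K` and `Z = ⁅H,H⁆ ⊓ ⁅K,K⁆`; both are central
in `G`.  Coefficients are taken in a divisible abelian group `D`, regarded as a trivial
module.  Second cohomology `H2 X D` is realized concretely as (inhomogeneous)
2-cocycles modulo 2-coboundaries, and `Hom(X, D)` is realized as `Additive X →+ D`.
-/

open scoped TensorProduct

set_option maxHeartbeats 1000000
set_option synthInstance.maxHeartbeats 1000000
set_option synthInstance.maxSize 2000

namespace SchurCP

variable (G : Type) [Group G] (D : Type) [AddCommGroup D]

/-- The group of 2-cocycles on `G` with values in the trivial module `D`. -/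
def cocycles2 : AddSubgroup (G → G → D) where
  carrier := {f | ∀ g h k : G, f g h + f (g * h) k = f h k + f g (h * k)}
  zero_mem' := by intro g h k; simp
  add_mem' := by
    intro a b ha hb g h k
    simp only [Pi.add_apply]
    rw [add_add_add_comm, ha g h k, hb g h k, add_add_add_comm]
  neg_mem' := by
    intro a ha g h k
    simp only [Pi.neg_apply]
    rw [← neg_add, ← neg_add, ha g h k]

/-- The group of 2-coboundaries on `G` with values in the trivial module `D`. -/
def coboundaries2 : AddSubgroup (G → G → D) where
  carrier := {f | ∃ φ : G → D, ∀ g h : G, f g h = φ g + φ h - φ (g * h)}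
  zero_mem' := ⟨0, by simp⟩
  add_mem' := by
    rintro a b ⟨φ, hφ⟩ ⟨ψ, hψ⟩
    exact ⟨φ + ψ, fun g h => by simp only [Pi.add_apply, hφ g h, hψ g h]; abel⟩
  neg_mem' := by
    rintro a ⟨φ, hφ⟩
    exact ⟨-φ, fun g h => by simp only [Pi.neg_apply, hφ g h]; abel⟩

/-- The second cohomology group `H²(G, D)` of `G` with coefficients in the
trivial module `D`. -/
def H2 : Type := cocycles2 G D ⧸ (coboundaries2 G D).addSubgroupOf (cocycles2 G D)

instance : AddCommGroup (H2 G D) :=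
  QuotientAddGroup.Quotient.addCommGroup ((coboundaries2 G D).addSubgroupOf (cocycles2 G D))

variable {G D}

/-- The cohomology class of a 2-cocycle. -/
abbrev H2mk (f : cocycles2 G D) : H2 G D := QuotientAddGroup.mk f

/-- Pullback of a 2-cocycle along a group homomorphism. -/
def pullCocycle {G' : Type} [Group G'] (π : G' →* G) :
    cocycles2 G D →+ cocycles2 G' D where
  toFun f := ⟨fun x y => (f : G → G → D) (π x) (π y), by
    intro x y z
    simpa only [map_mul] using f.2 (π x) (π y) (π z)⟩
  map_zero' := rfl
  map_add' _ _ := rfl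

/-- The homomorphism `H²(G, D) → H²(G', D)` induced by a group homomorphism
`π : G' → G`; this specializes to restriction maps (for inclusions of subgroups)
and to inflation maps (for quotient maps). -/
def H2Map {G' : Type} [Group G'] (π : G' →* G) : H2 G D →+ H2 G' D :=
  QuotientAddGroup.map _ _ (pullCocycle π) (by
    intro f hf
    rw [AddSubgroup.mem_addSubgroupOf] at hf
    rw [AddSubgroup.mem_comap, AddSubgroup.mem_addSubgroupOf]
    obtain ⟨φ, hφ⟩ := hf
    exact ⟨fun x => φ (π x), fun x y => by
      show (f : G → G → D) (π x) (π y) = _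
      rw [hφ (π x) (π y), ← map_mul]⟩)

theorem commutator_le_self {X : Type} [Group X] (H : Subgroup X) : ⁅H, H⁆ ≤ H := by
  rw [Subgroup.commutator_le]
  intro g₁ h₁ g₂ h₂
  rw [commutatorElement_def]
  exact H.mul_mem (H.mul_mem (H.mul_mem h₁ h₂) (H.inv_mem h₁)) (H.inv_mem h₂)

theorem inf_commutator_le_inf {X : Type} [Group X] (H K : Subgroup X) :
    ⁅H, H⁆ ⊓ ⁅K, K⁆ ≤ H ⊓ K :=
  inf_le_inf (commutator_le_self H) (commutator_le_self K)

theorem subgroupOf_le {X : Type} [Group X] {B C : Subgroup X} (h : B ≤ C)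
    (J : Subgroup X) : B.subgroupOf J ≤ C.subgroupOf J := fun _x hx => h hx

/-- The natural projection `X/N → X/M` for `N ≤ M`. -/
def quotProj {X : Type} [Group X] {N M : Subgroup X} [N.Normal] [M.Normal] (h : N ≤ M) :
    (X ⧸ N) →* (X ⧸ M) :=
  QuotientGroup.map N M (MonoidHom.id X) (by rwa [Subgroup.comap_id])

/-- The inflation homomorphism `H²(X/M, D) → H²(X/N, D)` for `N ≤ M`. -/
def inflMap {X : Type} [Group X] {N M : Subgroup X} [N.Normal] [M.Normal]
    (h : N ≤ M) (D : Type) [AddCommGroup D] : H2 (X ⧸ M) D →+ H2 (X ⧸ N) D :=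
  H2Map (quotProj h)

/-- The natural homomorphism `H/(A ∩ H) → X/A` for subgroups `A, H` of `X`;
for `A ≤ H` this realizes `H/A` as a subgroup of `X/A`. -/
def quotInclusion {X : Type} [Group X] (H A : Subgroup X) [A.Normal]
    [(A.subgroupOf H).Normal] : (↥H ⧸ A.subgroupOf H) →* X ⧸ A :=
  QuotientGroup.map (A.subgroupOf H) A H.subtype (fun _x hx => hx)

/-- The abelian tensor product `X ⊗ Y = X/[X,X] ⊗_ℤ Y/[Y,Y]` of two groups. -/
abbrev AbTensor (X Y : Type) [Group X] [Group Y] : Type :=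
  TensorProduct ℤ (Additive (Abelianization X)) (Additive (Abelianization Y))

/-- The element `x[X,X] ⊗ y[Y,Y]` of the abelian tensor product. -/
noncomputable abbrev tmulAb {X Y : Type} [Group X] [Group Y] (x : X) (y : Y) :
    AbTensor X Y :=
  Additive.ofMul (Abelianization.of x) ⊗ₜ[ℤ] Additive.ofMul (Abelianization.of y)

/-- The map on abelian tensor products induced by a pair of group homomorphisms. -/
noncomputable def abTensorMap {X Y X' Y' : Type} [Group X] [Group Y] [Group X'] [Group Y']
    (f : X →* X') (g : Y →* Y') : AbTensor X Y →ₗ[ℤ] AbTensor X' Y' :=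
  TensorProduct.map (MonoidHom.toAdditive (Abelianization.map f)).toIntLinearMap
    (MonoidHom.toAdditive (Abelianization.map g)).toIntLinearMap


section Helpers

variable {H K : Subgroup G}

theorem baer_ext [DivisibleBy D ℤ] {M N : Type} [AddCommGroup M] [AddCommGroup N]
    (f : M →+ N) (hf : Function.Injective f) (g : M →+ D) :
    ∃ h : N →+ D, ∀ x, h (f x) = g x := by
  obtain ⟨h, hh⟩ := (Module.Baer.of_divisible D).extension_property_addMonoidHom f hf g
  exact ⟨h, fun x => DFunLike.congr_fun hh x⟩

theorem map_subtype_commutator (J : Subgroup G) :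
    Subgroup.map J.subtype (commutator ↥J) = ⁅J, J⁆ := by
  rw [commutator_def, Subgroup.map_commutator]
  congr 1 <;> rw [← MonoidHom.range_eq_map, Subgroup.range_subtype]

theorem mem_commutator_of_mem_sub {J : Subgroup G} {z : G} (hz' : z ∈ J)
    (hz : z ∈ ⁅J, J⁆) : (⟨z, hz'⟩ : ↥J) ∈ commutator ↥J := by
  rw [← map_subtype_commutator] at hz
  obtain ⟨y, hy, hyz⟩ := hz
  have : y = ⟨z, hz'⟩ := Subtype.ext hyz
  rwa [← this]

theorem coe_mem_commutator {J : Subgroup G} {y : ↥J} (hy : y ∈ commutator ↥J) :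
    (y : G) ∈ ⁅J, J⁆ := by
  rw [← map_subtype_commutator]
  exact ⟨y, hy, rfl⟩

/-- a map additive on a subgroup kills the commutator subgroup -/
theorem kills_commutator {J : Subgroup G} (u : G → D)
    (hu : ∀ x ∈ J, ∀ y ∈ J, u (x * y) = u x + u y) :
    ∀ z ∈ ⁅J, J⁆, u z = 0 := by
  have hU : ∀ x y : ↥J, u ((x : G) * y) = u x + u y := fun x y => hu x x.2 y y.2
  let U : ↥J →* Multiplicative D :=
    MonoidHom.mk' (fun x => Multiplicative.ofAdd (u x)) (fun x y => by
      show Multiplicative.ofAdd _ = Multiplicative.ofAdd (u ↑x + u ↑y)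
      rw [← hU x y]; rfl)
  have hker : commutator ↥J ≤ U.ker := by
    rw [commutator_def, Subgroup.commutator_le]
    intro g _ h _
    rw [MonoidHom.mem_ker, map_commutatorElement]
    exact commutatorElement_eq_one_iff_commute.2 (mul_comm _ _)
  intro z hz
  have h1 : U ⟨z, commutator_le_self J hz⟩ = 1 :=
    hker (mem_commutator_of_mem_sub _ hz)
  exact Multiplicative.ofAdd.injective h1


theorem mem_central (hcomm : ∀ h ∈ H, ∀ k ∈ K, Commute h k) [K.Normal]
    (hprod : H ⊔ K = ⊤) {a : G} (ha : a ∈ H ⊓ K) (g : G) : a * g = g * a := by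
  have hg : g ∈ (↑(H ⊔ K) : Set G) := by rw [hprod]; trivial
  rw [Subgroup.mul_normal] at hg
  obtain ⟨h, hh, k, hk, rfl⟩ := hg
  have c1 : Commute a h := (hcomm h hh a ha.2).symm
  have c2 : Commute a k := hcomm a ha.1 k hk
  exact (c1.mul_right c2).eq

/-- commutativity of the intersection -/
theorem inf_comm_group (hcomm : ∀ h ∈ H, ∀ k ∈ K, Commute h k) :
    ∀ a b : ↥(H ⊓ K), a * b = b * a := by
  intro a b
  exact Subtype.ext ((hcomm a a.2.1 b b.2.2).eq)

/-- extension of a hom on `Z = [H,H] ⊓ [K,K]` to an additive function on `A = H ⊓ K` -/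
theorem exists_ext [DivisibleBy D ℤ] (hcomm : ∀ h ∈ H, ∀ k ∈ K, Commute h k)
    (γ : Additive ↥(⁅H, H⁆ ⊓ ⁅K, K⁆) →+ D) :
    ∃ c : G → D, (∀ a ∈ H ⊓ K, ∀ b ∈ H ⊓ K, c (a * b) = c a + c b) ∧
      (∀ z (hz : z ∈ ⁅H, H⁆ ⊓ ⁅K, K⁆), c z = γ (Additive.ofMul ⟨z, hz⟩)) := by
  classical
  have hle : ⁅H, H⁆ ⊓ ⁅K, K⁆ ≤ H ⊓ K :=
    inf_le_inf (commutator_le_self H) (commutator_le_self K)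
  letI : CommGroup ↥(H ⊓ K) :=
    { (inferInstance : Group ↥(H ⊓ K)) with mul_comm := inf_comm_group hcomm }
  have hc2 : ∀ a b : ↥(⁅H, H⁆ ⊓ ⁅K, K⁆), a * b = b * a := fun a b =>
    Subtype.ext ((hcomm a (hle a.2).1 b (hle b.2).2).eq)
  letI : CommGroup ↥(⁅H, H⁆ ⊓ ⁅K, K⁆) :=
    { (inferInstance : Group ↥(⁅H, H⁆ ⊓ ⁅K, K⁆)) with mul_comm := hc2 }
  let f : Additive ↥(⁅H, H⁆ ⊓ ⁅K, K⁆) →+ Additive ↥(H ⊓ K) :=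
    MonoidHom.toAdditive (Subgroup.inclusion hle)
  have hfinj : Function.Injective f := by
    intro x y hxy
    apply Additive.toMul.injective
    exact Subgroup.inclusion_injective hle (congrArg Additive.toMul hxy)
  obtain ⟨hext, hh⟩ := baer_ext f hfinj γ
  refine ⟨fun g => if hg : g ∈ H ⊓ K then hext (Additive.ofMul (⟨g, hg⟩ : ↥(H ⊓ K))) else 0,
    ?_, ?_⟩
  · intro a ha b hb
    dsimp only
    rw [dif_pos (mul_mem ha hb), dif_pos ha, dif_pos hb]
    have : (⟨a * b, mul_mem ha hb⟩ : ↥(H ⊓ K)) = ⟨a, ha⟩ * ⟨b, hb⟩ := rfl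
    rw [this]
    exact map_add hext (Additive.ofMul ⟨a, ha⟩) (Additive.ofMul ⟨b, hb⟩)
  · intro z hz
    dsimp only
    rw [dif_pos (hle hz)]
    have : Additive.ofMul (⟨z, hle hz⟩ : ↥(H ⊓ K)) = f (Additive.ofMul ⟨z, hz⟩) := rfl
    rw [this, hh]

theorem exists_uv [DivisibleBy D ℤ] (hcomm : ∀ h ∈ H, ∀ k ∈ K, Commute h k)
    (c : G → D) (hcA : ∀ a ∈ H ⊓ K, ∀ b ∈ H ⊓ K, c (a * b) = c a + c b)
    (hZ : ∀ z ∈ ⁅H, H⁆ ⊓ ⁅K, K⁆, c z = 0) :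
    ∃ u v : G → D, (∀ x ∈ H, ∀ y ∈ H, u (x * y) = u x + u y) ∧
      (∀ x ∈ K, ∀ y ∈ K, v (x * y) = v x + v y) ∧
      (∀ a ∈ H ⊓ K, c a = u a + v a⁻¹) := by
  classical
  letI : CommGroup ↥(H ⊓ K) :=
    { (inferInstance : Group ↥(H ⊓ K)) with mul_comm := inf_comm_group hcomm }
  have hmulmk : ∀ a b : ↥(H ⊓ K),
      ((Abelianization.of (Subgroup.inclusion (inf_le_left (b := K)) (a * b)),
        (Abelianization.of (Subgroup.inclusion (inf_le_right (a := H)) (a * b)))⁻¹) :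
        Abelianization ↥H × Abelianization ↥K) =
      (Abelianization.of (Subgroup.inclusion inf_le_left a),
        (Abelianization.of (Subgroup.inclusion inf_le_right a))⁻¹) *
      (Abelianization.of (Subgroup.inclusion inf_le_left b),
        (Abelianization.of (Subgroup.inclusion inf_le_right b))⁻¹) := by
    intro a b
    refine Prod.ext ?_ ?_
    · show _ = Abelianization.of _ * Abelianization.of _
      rw [← map_mul, ← map_mul]
    · show _ = _ * _
      rw [← mul_inv, ← map_mul, ← map_mul]
  let θm : ↥(H ⊓ K) →* Abelianization ↥H × Abelianization ↥K :=
    MonoidHom.mk' (fun a => (Abelianization.of (Subgroup.inclusion inf_le_left a),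
      (Abelianization.of (Subgroup.inclusion inf_le_right a))⁻¹)) hmulmk
  let cm : ↥(H ⊓ K) →* Multiplicative D :=
    MonoidHom.mk' (fun a => Multiplicative.ofAdd (c ↑a)) (fun a b => by
      show Multiplicative.ofAdd (c ((a : G) * b)) = _
      rw [hcA a a.2 b b.2]; rfl)
  have hker : θm.ker ≤ cm.ker := by
    intro a ha
    rw [MonoidHom.mem_ker] at ha ⊢
    have h1 : Abelianization.of (Subgroup.inclusion (inf_le_left (b := K)) a) = 1 :=
      congrArg Prod.fst ha
    have h2 : (Abelianization.of (Subgroup.inclusion (inf_le_right (a := H)) a))⁻¹ = 1 :=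
      congrArg Prod.snd ha
    rw [inv_eq_one] at h2
    have m1 : (a : G) ∈ ⁅H, H⁆ :=
      coe_mem_commutator ((QuotientGroup.eq_one_iff _).mp h1)
    have m2 : (a : G) ∈ ⁅K, K⁆ :=
      coe_mem_commutator ((QuotientGroup.eq_one_iff _).mp h2)
    have : c (a : G) = 0 := hZ _ ⟨m1, m2⟩
    show Multiplicative.ofAdd (c (a : G)) = 1
    rw [this]; rfl
  let cq : (↥(H ⊓ K) ⧸ θm.ker) →* Multiplicative D := QuotientGroup.lift θm.ker cm hker
  letI : CommGroup (↥(H ⊓ K) ⧸ θm.ker) := inferInstance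
  let fq : Additive (↥(H ⊓ K) ⧸ θm.ker) →+
      Additive (Abelianization ↥H × Abelianization ↥K) :=
    MonoidHom.toAdditive (QuotientGroup.kerLift θm)
  have hfqinj : Function.Injective fq := by
    intro x y hxy
    apply Additive.toMul.injective
    exact QuotientGroup.kerLift_injective θm (congrArg Additive.toMul hxy)
  let gq : Additive (↥(H ⊓ K) ⧸ θm.ker) →+ D :=
    AddMonoidHom.mk' (fun q => Multiplicative.toAdd (cq q.toMul)) (fun a b => by
      show Multiplicative.toAdd (cq (a.toMul * b.toMul)) = _
      rw [map_mul]; rfl)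
  obtain ⟨Φ, hΦ⟩ := baer_ext fq hfqinj gq
  have hΦadd : ∀ p q : Abelianization ↥H × Abelianization ↥K,
      Φ (Additive.ofMul (p * q)) = Φ (Additive.ofMul p) + Φ (Additive.ofMul q) := by
    intro p q
    exact map_add Φ (Additive.ofMul p) (Additive.ofMul q)
  have hΦθ : ∀ a : ↥(H ⊓ K), Φ (Additive.ofMul (θm a)) = c ↑a := by
    intro a
    have := hΦ (Additive.ofMul (QuotientGroup.mk (s := θm.ker) a))
    exact this
  refine ⟨fun g => if hg : g ∈ H then
      Φ (Additive.ofMul ((Abelianization.of ⟨g, hg⟩, 1) : Abelianization ↥H × Abelianization ↥K)) else 0,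
    fun g => if hg : g ∈ K then
      Φ (Additive.ofMul ((1, Abelianization.of ⟨g, hg⟩) : Abelianization ↥H × Abelianization ↥K)) else 0,
    ?_, ?_, ?_⟩
  · intro x hx y hy
    dsimp only
    rw [dif_pos (mul_mem hx hy), dif_pos hx, dif_pos hy, ← hΦadd]
    congr 1
    show Additive.ofMul _ = Additive.ofMul _
    congr 1
    refine Prod.ext ?_ ?_
    · show Abelianization.of (⟨x * y, _⟩ : ↥H) = Abelianization.of _ * Abelianization.of _
      rw [← map_mul]
      rfl
    · show (1 : Abelianization ↥K) = 1 * 1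
      rw [mul_one]
  · intro x hx y hy
    dsimp only
    rw [dif_pos (mul_mem hx hy), dif_pos hx, dif_pos hy, ← hΦadd]
    congr 1
    show Additive.ofMul _ = Additive.ofMul _
    congr 1
    refine Prod.ext ?_ ?_
    · show (1 : Abelianization ↥H) = 1 * 1
      rw [mul_one]
    · show Abelianization.of (⟨x * y, _⟩ : ↥K) = Abelianization.of _ * Abelianization.of _
      rw [← map_mul]
      rfl
  · intro a ha
    dsimp only
    rw [dif_pos (Subgroup.mem_inf.mp ha).1, dif_pos (K.inv_mem (Subgroup.mem_inf.mp ha).2), ← hΦadd, ← hΦθ ⟨a, ha⟩]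
    congr 2
    refine Prod.ext ?_ ?_
    · show Abelianization.of _ = Abelianization.of _ * 1
      rw [mul_one]
      rfl
    · show (Abelianization.of (Subgroup.inclusion inf_le_right (⟨a, ha⟩ : ↥(H ⊓ K))))⁻¹ =
        1 * Abelianization.of (⟨a⁻¹, K.inv_mem ha.2⟩ : ↥K)
      rw [one_mul, ← map_inv]
      rfl

theorem cls_surj {X : Type} [Group X] {N : Subgroup X} [N.Normal]
    (t : Abelianization (X ⧸ N)) : ∃ x : X, Abelianization.of (QuotientGroup.mk x) = t := by
  obtain ⟨q, rfl⟩ := QuotientGroup.mk_surjective (s := commutator (X ⧸ N)) t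
  obtain ⟨x, rfl⟩ := QuotientGroup.mk_surjective (s := N) q
  exact ⟨x, rfl⟩

theorem beta_ext [((H ⊓ K).subgroupOf H).Normal] [((H ⊓ K).subgroupOf K).Normal]
    (β : AbTensor (↥H ⧸ (H ⊓ K).subgroupOf H) (↥K ⧸ (H ⊓ K).subgroupOf K) →+ D)
    (h : ∀ (x : ↥H) (y : ↥K),
      β (Additive.ofMul (Abelianization.of (QuotientGroup.mk x)) ⊗ₜ[ℤ]
        Additive.ofMul (Abelianization.of (QuotientGroup.mk y))) = 0) :
    β = 0 := by
  ext t
  show β t = 0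
  induction t using TensorProduct.induction_on with
  | zero => simp
  | tmul u v =>
    obtain ⟨x, hx⟩ := cls_surj u.toMul
    obtain ⟨y, hy⟩ := cls_surj v.toMul
    have hu : u = Additive.ofMul (Abelianization.of (QuotientGroup.mk x)) := by
      rw [hx]; rfl
    have hv : v = Additive.ofMul (Abelianization.of (QuotientGroup.mk y)) := by
      rw [hy]; rfl
    rw [hu, hv]
    exact h x y
  | add a b ha hb => rw [map_add, ha, hb, add_zero]

theorem exists_beta [((H ⊓ K).subgroupOf H).Normal] [((H ⊓ K).subgroupOf K).Normal]
    (p : ↥H → ↥K → D)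
    (hl : ∀ x₁ x₂ y, p (x₁ * x₂) y = p x₁ y + p x₂ y)
    (hr : ∀ x y₁ y₂, p x (y₁ * y₂) = p x y₁ + p x y₂)
    (hA1 : ∀ (x : ↥H) (y : ↥K), (x : G) ∈ H ⊓ K → p x y = 0)
    (hA2 : ∀ (x : ↥H) (y : ↥K), (y : G) ∈ H ⊓ K → p x y = 0) :
    ∃ β : AbTensor (↥H ⧸ (H ⊓ K).subgroupOf H) (↥K ⧸ (H ⊓ K).subgroupOf K) →+ D,
      ∀ (x : ↥H) (y : ↥K),
        β (Additive.ofMul (Abelianization.of (QuotientGroup.mk x)) ⊗ₜ[ℤ]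
          Additive.ofMul (Abelianization.of (QuotientGroup.mk y))) = p x y := by
  let P3 : ↥H → (Abelianization (↥K ⧸ (H ⊓ K).subgroupOf K) →* Multiplicative D) := fun x =>
    Abelianization.lift (QuotientGroup.lift ((H ⊓ K).subgroupOf K)
      (MonoidHom.mk' (fun y => Multiplicative.ofAdd (p x y)) (fun y₁ y₂ => by
        rw [← ofAdd_add, ← hr]))
      (by
        intro y hy
        rw [MonoidHom.mem_ker]
        show Multiplicative.ofAdd (p x y) = 1
        rw [hA2 x y hy]
        rfl))
  have hP3val : ∀ (x : ↥H) (y : ↥K),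
      P3 x (Abelianization.of (QuotientGroup.mk y)) = Multiplicative.ofAdd (p x y) :=
    fun x y => rfl
  have hP3mul : ∀ x₁ x₂ : ↥H, P3 (x₁ * x₂) = P3 x₁ * P3 x₂ := by
    intro x₁ x₂
    refine MonoidHom.ext fun t => ?_
    obtain ⟨y, rfl⟩ := cls_surj t
    show P3 (x₁ * x₂) _ = P3 x₁ _ * P3 x₂ _
    rw [hP3val, hP3val, hP3val, hl, ofAdd_add]
  let Pbig : ↥H →* (Abelianization (↥K ⧸ (H ⊓ K).subgroupOf K) →* Multiplicative D) :=
    MonoidHom.mk' P3 hP3mul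
  have hPker : (H ⊓ K).subgroupOf H ≤ Pbig.ker := by
    intro x hx
    rw [MonoidHom.mem_ker]
    refine MonoidHom.ext fun t => ?_
    obtain ⟨y, rfl⟩ := cls_surj t
    show P3 x _ = 1
    rw [hP3val, hA1 x y hx]
    rfl
  let P5 : Abelianization (↥H ⧸ (H ⊓ K).subgroupOf H) →*
      (Abelianization (↥K ⧸ (H ⊓ K).subgroupOf K) →* Multiplicative D) :=
    Abelianization.lift (QuotientGroup.lift ((H ⊓ K).subgroupOf H) Pbig hPker)
  have hP5val : ∀ x : ↥H, P5 (Abelianization.of (QuotientGroup.mk x)) = P3 x := fun x => rfl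
  let inner : Abelianization (↥H ⧸ (H ⊓ K).subgroupOf H) →
      (Additive (Abelianization (↥K ⧸ (H ⊓ K).subgroupOf K)) →+ D) := fun w =>
    AddMonoidHom.mk' (fun v => Multiplicative.toAdd (P5 w v.toMul)) (fun v₁ v₂ => by
      show Multiplicative.toAdd (P5 w (v₁.toMul * v₂.toMul)) = _
      rw [map_mul]
      rfl)
  let Ψ : Additive (Abelianization (↥H ⧸ (H ⊓ K).subgroupOf H)) →+
      (Additive (Abelianization (↥K ⧸ (H ⊓ K).subgroupOf K)) →+ D) :=
    AddMonoidHom.mk' (fun w => inner w.toMul) (fun w₁ w₂ => by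
      refine AddMonoidHom.ext fun v => ?_
      show Multiplicative.toAdd (P5 (w₁.toMul * w₂.toMul) v.toMul) = _
      rw [map_mul]
      rfl)
  let L : Additive (Abelianization (↥H ⧸ (H ⊓ K).subgroupOf H)) →ₗ[ℤ]
      (Additive (Abelianization (↥K ⧸ (H ⊓ K).subgroupOf K)) →ₗ[ℤ] D) :=
    { toFun := fun w => (Ψ w).toIntLinearMap
      map_add' := fun a b => LinearMap.ext fun v => by
        show (Ψ (a + b)) v = (Ψ a) v + (Ψ b) v
        rw [map_add]
        rfl
      map_smul' := fun n a => LinearMap.ext fun v => by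
        show (Ψ (n • a)) v = n • ((Ψ a) v)
        rw [map_zsmul]
        rfl }
  refine ⟨(TensorProduct.lift L).toAddMonoidHom, fun x y => ?_⟩
  show TensorProduct.lift L (Additive.ofMul (Abelianization.of (QuotientGroup.mk x)) ⊗ₜ[ℤ]
    Additive.ofMul (Abelianization.of (QuotientGroup.mk y))) = p x y
  rw [TensorProduct.lift.tmul]
  rfl


theorem shuffle {A B C X : D} (h : A + B = C + X) : X = A + B - C := by
  rw [h]; abel

theorem shuffle' {A C E X : D} (h : A + X = C + E) : X = C + E - A := by
  rw [← h]; abel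

theorem pairing_mul {f : G → G → D}
    (hf : ∀ g h k : G, f g h + f (g * h) k = f h k + f g (h * k))
    (x₁ x₂ y : G) (c₁ : y * x₁ = x₁ * y) (c₂ : y * x₂ = x₂ * y) :
    f y (x₁ * x₂) - f (x₁ * x₂) y =
      (f y x₁ - f x₁ y) + (f y x₂ - f x₂ y) := by
  have t1 := hf y x₁ x₂
  rw [c₁] at t1
  have t2 := hf x₁ y x₂
  have t3 := hf x₁ x₂ y
  rw [← c₂] at t3
  have e1 : f y (x₁ * x₂) = f y x₁ + f (x₁ * y) x₂ - f x₁ x₂ := shuffle t1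
  have e3 : f x₁ (y * x₂) = f x₁ y + f (x₁ * y) x₂ - f y x₂ := shuffle t2
  have e4 : f (x₁ * x₂) y = f x₂ y + f x₁ (y * x₂) - f x₁ x₂ := shuffle' t3
  rw [e1, e4, e3]
  abel

/-- A choice of decomposition `g = h * k`. -/
structure IsSec (H K : Subgroup G) (σ : G → ↥H × ↥K) : Prop where
  mul : ∀ g, ((σ g).1 : G) * ((σ g).2 : G) = g
  eqH : ∀ g (hg : g ∈ H), σ g = (⟨g, hg⟩, 1)
  inK : ∀ g ∈ K, ((σ g).1 : G) ∈ H ⊓ K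

theorem exists_sec [K.Normal] (hprod : H ⊔ K = ⊤) :
    ∃ σ : G → ↥H × ↥K, IsSec H K σ := by
  classical
  have hex : ∀ g : G, ∃ p : ↥H × ↥K, ((p.1 : G) * (p.2 : G) = g) ∧
      (∀ hg : g ∈ H, p = (⟨g, hg⟩, 1)) ∧ (g ∈ K → ((p.1 : G) ∈ H ⊓ K)) := by
    intro g
    by_cases hg : g ∈ H
    · exact ⟨(⟨g, hg⟩, 1), by simp, fun _ => rfl, fun hk => Subgroup.mem_inf.mpr ⟨hg, hk⟩⟩
    · by_cases hk : g ∈ K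
      · exact ⟨(1, ⟨g, hk⟩), one_mul g, fun hg' => absurd hg' hg, fun _ => (H ⊓ K).one_mem⟩
      · have hg' : g ∈ (↑(H ⊔ K) : Set G) := by rw [hprod]; trivial
        rw [Subgroup.mul_normal] at hg'
        obtain ⟨h, hh, k, hkk, rfl⟩ := hg'
        exact ⟨(⟨h, hh⟩, ⟨k, hkk⟩), rfl, fun hmem => absurd hmem hg, fun hmem => absurd hmem hk⟩
  choose σ h1 h2 h3 using hex
  exact ⟨σ, ⟨h1, h2, h3⟩⟩

/-- The `H ⊓ K`-valued "factor set" measuring failure of multiplicativity of `σ`. -/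
def alph (σ : G → ↥H × ↥K) (g₁ g₂ : G) : G :=
  ((σ (g₁ * g₂)).1 : G)⁻¹ * ((σ g₁).1 : G) * ((σ g₂).1 : G)

section SecLemmas

variable {σ : G → ↥H × ↥K}

theorem sigma2_eq (hcomm : ∀ h ∈ H, ∀ k ∈ K, Commute h k) (s : IsSec H K σ) (g₁ g₂ : G) :
    ((σ (g₁ * g₂)).2 : G) = alph σ g₁ g₂ * (((σ g₁).2 : G) * ((σ g₂).2 : G)) := by
  have C : ((σ g₁).2 : G) * ((σ g₂).1 : G) = ((σ g₂).1 : G) * ((σ g₁).2 : G) :=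
    (hcomm _ (σ g₂).1.2 _ (σ g₁).2.2).eq.symm
  have E : g₁ * g₂ = ((σ g₁).1 : G) *
      (((σ g₁).2 : G) * (((σ g₂).1 : G) * ((σ g₂).2 : G))) := by
    rw [s.mul g₂, ← mul_assoc, s.mul g₁]
  apply mul_left_cancel (a := ((σ (g₁ * g₂)).1 : G))
  calc ((σ (g₁ * g₂)).1 : G) * ((σ (g₁ * g₂)).2 : G) = g₁ * g₂ := s.mul _
    _ = ((σ g₁).1 : G) * (((σ g₁).2 : G) * (((σ g₂).1 : G) * ((σ g₂).2 : G))) := E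
    _ = ((σ g₁).1 : G) * (((σ g₂).1 : G) * (((σ g₁).2 : G) * ((σ g₂).2 : G))) := by
        rw [← mul_assoc ((σ g₁).2 : G), C, mul_assoc]
    _ = ((σ (g₁ * g₂)).1 : G) * (alph σ g₁ g₂ * (((σ g₁).2 : G) * ((σ g₂).2 : G))) := by
        simp only [alph]; group

theorem alph_mem (hcomm : ∀ h ∈ H, ∀ k ∈ K, Commute h k) (s : IsSec H K σ) (g₁ g₂ : G) :
    alph σ g₁ g₂ ∈ H ⊓ K := by
  refine Subgroup.mem_inf.mpr ⟨mul_mem (mul_mem (inv_mem (σ (g₁ * g₂)).1.2) (σ g₁).1.2)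
    (σ g₂).1.2, ?_⟩
  have E := sigma2_eq hcomm s g₁ g₂
  have E' : alph σ g₁ g₂ =
      ((σ (g₁ * g₂)).2 : G) * (((σ g₁).2 : G) * ((σ g₂).2 : G))⁻¹ := by
    rw [E]; group
  rw [E']
  exact mul_mem (σ (g₁ * g₂)).2.2 (inv_mem (mul_mem (σ g₁).2.2 (σ g₂).2.2))

theorem alph_mul (hcomm : ∀ h ∈ H, ∀ k ∈ K, Commute h k) (s : IsSec H K σ)
    (hcen : ∀ a ∈ H ⊓ K, ∀ g : G, a * g = g * a) (g₁ g₂ g₃ : G) :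
    alph σ g₁ g₂ * alph σ (g₁ * g₂) g₃ = alph σ g₂ g₃ * alph σ g₁ (g₂ * g₃) := by
  have hassoc : g₁ * (g₂ * g₃) = g₁ * g₂ * g₃ := (mul_assoc _ _ _).symm
  have e1 := hcen _ (alph_mem hcomm s g₁ g₂)
    (((σ (g₁ * g₂ * g₃)).1 : G)⁻¹ * ((σ (g₁ * g₂)).1 : G))
  have e2 := hcen _ (alph_mem hcomm s g₂ g₃)
    (((σ (g₁ * g₂ * g₃)).1 : G)⁻¹ * ((σ g₁).1 : G) * ((σ (g₂ * g₃)).1 : G))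
  simp only [alph] at e1 e2 ⊢
  rw [hassoc]
  calc (((σ (g₁ * g₂)).1 : G)⁻¹ * ((σ g₁).1 : G) * ((σ g₂).1 : G)) *
        (((σ (g₁ * g₂ * g₃)).1 : G)⁻¹ * ((σ (g₁ * g₂)).1 : G) * ((σ g₃).1 : G))
      = ((((σ (g₁ * g₂)).1 : G)⁻¹ * ((σ g₁).1 : G) * ((σ g₂).1 : G)) *
        (((σ (g₁ * g₂ * g₃)).1 : G)⁻¹ * ((σ (g₁ * g₂)).1 : G))) * ((σ g₃).1 : G) := by
        group
    _ = ((((σ (g₁ * g₂ * g₃)).1 : G)⁻¹ * ((σ (g₁ * g₂)).1 : G)) *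
        (((σ (g₁ * g₂)).1 : G)⁻¹ * ((σ g₁).1 : G) * ((σ g₂).1 : G))) * ((σ g₃).1 : G) := by
        rw [e1]
    _ = (((σ (g₁ * g₂ * g₃)).1 : G)⁻¹ * ((σ g₁).1 : G) * ((σ (g₂ * g₃)).1 : G)) *
        (((σ (g₂ * g₃)).1 : G)⁻¹ * ((σ g₂).1 : G) * ((σ g₃).1 : G)) := by
        group
    _ = (((σ (g₂ * g₃)).1 : G)⁻¹ * ((σ g₂).1 : G) * ((σ g₃).1 : G)) *
        (((σ (g₁ * g₂ * g₃)).1 : G)⁻¹ * ((σ g₁).1 : G) * ((σ (g₂ * g₃)).1 : G)) := by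
        rw [e2]

end SecLemmas


section Cls

variable {X : Type} [Group X] (N : Subgroup X) [N.Normal]

theorem cls_mul (x y : X) :
    Additive.ofMul (Abelianization.of (QuotientGroup.mk (s := N) (x * y))) =
      Additive.ofMul (Abelianization.of (QuotientGroup.mk (s := N) x)) +
        Additive.ofMul (Abelianization.of (QuotientGroup.mk (s := N) y)) := by
  rw [QuotientGroup.mk_mul, map_mul]
  rfl

theorem cls_zero {x : X} (hx : x ∈ N) :
    Additive.ofMul (Abelianization.of (QuotientGroup.mk (s := N) x)) = 0 := by
  have h1 : (QuotientGroup.mk (s := N) x) = 1 := (QuotientGroup.eq_one_iff x).mpr hx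
  rw [h1, map_one]
  rfl

end Cls

section FcSection

variable [((H ⊓ K).subgroupOf H).Normal] [((H ⊓ K).subgroupOf K).Normal]

/-- The distinguished 2-cocycle attached to `c : A → D` and
`β : Hom(H/A ⊗ K/A, D)`. -/
noncomputable def Fcf (σ : G → ↥H × ↥K) (c : G → D)
    (β : AbTensor (↥H ⧸ (H ⊓ K).subgroupOf H) (↥K ⧸ (H ⊓ K).subgroupOf K) →+ D)
    (g₁ g₂ : G) : D :=
  c (alph σ g₁ g₂) +
    β (Additive.ofMul (Abelianization.of (QuotientGroup.mk (σ g₂).1)) ⊗ₜ[ℤ]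
      Additive.ofMul (Abelianization.of (QuotientGroup.mk (σ g₁).2)))

variable {σ : G → ↥H × ↥K}

theorem cls1_decomp (hcomm : ∀ h ∈ H, ∀ k ∈ K, Commute h k) (s : IsSec H K σ) (g₁ g₂ : G) :
    Additive.ofMul (Abelianization.of (QuotientGroup.mk
        (s := (H ⊓ K).subgroupOf H) (σ (g₁ * g₂)).1)) =
      Additive.ofMul (Abelianization.of (QuotientGroup.mk (s := (H ⊓ K).subgroupOf H) (σ g₁).1)) +
        Additive.ofMul (Abelianization.of (QuotientGroup.mk (s := (H ⊓ K).subgroupOf H) (σ g₂).1)) := by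
  have hmem : (alph σ g₁ g₂)⁻¹ ∈ H ⊓ K := inv_mem (alph_mem hcomm s g₁ g₂)
  have hd : (σ (g₁ * g₂)).1 = ((σ g₁).1 * (σ g₂).1) *
      (⟨(alph σ g₁ g₂)⁻¹, hmem.1⟩ : ↥H) := by
    apply Subtype.ext
    show ((σ (g₁ * g₂)).1 : G) = ((σ g₁).1 : G) * ((σ g₂).1 : G) * (alph σ g₁ g₂)⁻¹
    simp only [alph]
    group
  have hz : (⟨(alph σ g₁ g₂)⁻¹, hmem.1⟩ : ↥H) ∈ (H ⊓ K).subgroupOf H :=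
    Subgroup.mem_subgroupOf.mpr hmem
  rw [hd, cls_mul, cls_mul, cls_zero _ hz, add_zero]

theorem cls2_decomp (hcomm : ∀ h ∈ H, ∀ k ∈ K, Commute h k) (s : IsSec H K σ) (g₁ g₂ : G) :
    Additive.ofMul (Abelianization.of (QuotientGroup.mk
        (s := (H ⊓ K).subgroupOf K) (σ (g₁ * g₂)).2)) =
      Additive.ofMul (Abelianization.of (QuotientGroup.mk (s := (H ⊓ K).subgroupOf K) (σ g₁).2)) +
        Additive.ofMul (Abelianization.of (QuotientGroup.mk (s := (H ⊓ K).subgroupOf K) (σ g₂).2)) := by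
  have hmem : alph σ g₁ g₂ ∈ H ⊓ K := alph_mem hcomm s g₁ g₂
  have hd : (σ (g₁ * g₂)).2 = (⟨alph σ g₁ g₂, hmem.2⟩ : ↥K) * ((σ g₁).2 * (σ g₂).2) := by
    apply Subtype.ext
    show ((σ (g₁ * g₂)).2 : G) = alph σ g₁ g₂ * (((σ g₁).2 : G) * ((σ g₂).2 : G))
    exact sigma2_eq hcomm s g₁ g₂
  have hz : (⟨alph σ g₁ g₂, hmem.2⟩ : ↥K) ∈ (H ⊓ K).subgroupOf K :=
    Subgroup.mem_subgroupOf.mpr hmem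
  rw [hd, cls_mul, cls_mul, cls_zero _ hz, zero_add]

theorem Fcf_cocycle (hcomm : ∀ h ∈ H, ∀ k ∈ K, Commute h k) (s : IsSec H K σ)
    (hcen : ∀ a ∈ H ⊓ K, ∀ g : G, a * g = g * a)
    (c : G → D) (hcA : ∀ a ∈ H ⊓ K, ∀ b ∈ H ⊓ K, c (a * b) = c a + c b)
    (β : AbTensor (↥H ⧸ (H ⊓ K).subgroupOf H) (↥K ⧸ (H ⊓ K).subgroupOf K) →+ D) :
    Fcf σ c β ∈ cocycles2 G D := by
  intro g₁ g₂ g₃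
  simp only [Fcf]
  have hcpart : c (alph σ g₁ g₂) + c (alph σ (g₁ * g₂) g₃) =
      c (alph σ g₂ g₃) + c (alph σ g₁ (g₂ * g₃)) := by
    rw [← hcA _ (alph_mem hcomm s g₁ g₂) _ (alph_mem hcomm s (g₁ * g₂) g₃),
      ← hcA _ (alph_mem hcomm s g₂ g₃) _ (alph_mem hcomm s g₁ (g₂ * g₃)),
      alph_mul hcomm s hcen g₁ g₂ g₃]
  have hbpart : β (Additive.ofMul (Abelianization.of (QuotientGroup.mk (σ g₂).1)) ⊗ₜ[ℤ]
        Additive.ofMul (Abelianization.of (QuotientGroup.mk (σ g₁).2))) +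
      β (Additive.ofMul (Abelianization.of (QuotientGroup.mk (σ g₃).1)) ⊗ₜ[ℤ]
        Additive.ofMul (Abelianization.of (QuotientGroup.mk (σ (g₁ * g₂)).2))) =
      β (Additive.ofMul (Abelianization.of (QuotientGroup.mk (σ g₃).1)) ⊗ₜ[ℤ]
        Additive.ofMul (Abelianization.of (QuotientGroup.mk (σ g₂).2))) +
      β (Additive.ofMul (Abelianization.of (QuotientGroup.mk (σ (g₂ * g₃)).1)) ⊗ₜ[ℤ]
        Additive.ofMul (Abelianization.of (QuotientGroup.mk (σ g₁).2))) := by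
    rw [← map_add, ← map_add]
    congr 1
    rw [cls2_decomp hcomm s g₁ g₂, cls1_decomp hcomm s g₂ g₃, TensorProduct.tmul_add,
      TensorProduct.add_tmul]
    abel
  calc c (alph σ g₁ g₂) +
        β (Additive.ofMul (Abelianization.of (QuotientGroup.mk (σ g₂).1)) ⊗ₜ[ℤ]
          Additive.ofMul (Abelianization.of (QuotientGroup.mk (σ g₁).2))) +
      (c (alph σ (g₁ * g₂) g₃) +
        β (Additive.ofMul (Abelianization.of (QuotientGroup.mk (σ g₃).1)) ⊗ₜ[ℤ]
          Additive.ofMul (Abelianization.of (QuotientGroup.mk (σ (g₁ * g₂)).2))))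
      = (c (alph σ g₁ g₂) + c (alph σ (g₁ * g₂) g₃)) +
        (β (Additive.ofMul (Abelianization.of (QuotientGroup.mk (σ g₂).1)) ⊗ₜ[ℤ]
          Additive.ofMul (Abelianization.of (QuotientGroup.mk (σ g₁).2))) +
        β (Additive.ofMul (Abelianization.of (QuotientGroup.mk (σ g₃).1)) ⊗ₜ[ℤ]
          Additive.ofMul (Abelianization.of (QuotientGroup.mk (σ (g₁ * g₂)).2)))) := by
        abel
    _ = (c (alph σ g₂ g₃) + c (alph σ g₁ (g₂ * g₃))) +
        (β (Additive.ofMul (Abelianization.of (QuotientGroup.mk (σ g₃).1)) ⊗ₜ[ℤ]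
          Additive.ofMul (Abelianization.of (QuotientGroup.mk (σ g₂).2))) +
        β (Additive.ofMul (Abelianization.of (QuotientGroup.mk (σ (g₂ * g₃)).1)) ⊗ₜ[ℤ]
          Additive.ofMul (Abelianization.of (QuotientGroup.mk (σ g₁).2)))) := by
        rw [hcpart, hbpart]
    _ = c (alph σ g₂ g₃) +
        β (Additive.ofMul (Abelianization.of (QuotientGroup.mk (σ g₃).1)) ⊗ₜ[ℤ]
          Additive.ofMul (Abelianization.of (QuotientGroup.mk (σ g₂).2))) +
      (c (alph σ g₁ (g₂ * g₃)) +
        β (Additive.ofMul (Abelianization.of (QuotientGroup.mk (σ (g₂ * g₃)).1)) ⊗ₜ[ℤ]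
          Additive.ofMul (Abelianization.of (QuotientGroup.mk (σ g₁).2)))) := by
        abel

theorem c_one (c : G → D) (hcA : ∀ a ∈ H ⊓ K, ∀ b ∈ H ⊓ K, c (a * b) = c a + c b) :
    c 1 = 0 := by
  have := hcA 1 (one_mem _) 1 (one_mem _)
  rw [mul_one] at this
  exact right_eq_add.mp this

theorem Fcf_resH (s : IsSec H K σ)
    (c : G → D) (hcA : ∀ a ∈ H ⊓ K, ∀ b ∈ H ⊓ K, c (a * b) = c a + c b)
    (β : AbTensor (↥H ⧸ (H ⊓ K).subgroupOf H) (↥K ⧸ (H ⊓ K).subgroupOf K) →+ D)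
    (x y : G) (hx : x ∈ H) (hy : y ∈ H) : Fcf σ c β x y = 0 := by
  have e1 : σ x = (⟨x, hx⟩, 1) := s.eqH x hx
  have e2 : σ y = (⟨y, hy⟩, 1) := s.eqH y hy
  have e3 : σ (x * y) = (⟨x * y, mul_mem hx hy⟩, 1) := s.eqH (x * y) (mul_mem hx hy)
  simp only [Fcf, alph, e1, e2, e3]
  have hone : ((x * y)⁻¹ * x * y : G) = 1 := by group
  show c ((x * y)⁻¹ * x * y) + β (_ ⊗ₜ[ℤ] Additive.ofMul (Abelianization.of
    (QuotientGroup.mk (1 : ↥K)))) = 0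
  rw [hone, c_one c hcA]
  have hz : Additive.ofMul (Abelianization.of (QuotientGroup.mk (1 : ↥K))) =
      (0 : Additive (Abelianization (↥K ⧸ (H ⊓ K).subgroupOf K))) := cls_zero _ (one_mem _)
  rw [hz, TensorProduct.tmul_zero, map_zero, add_zero]

theorem Fcf_resK (hcomm : ∀ h ∈ H, ∀ k ∈ K, Commute h k) (s : IsSec H K σ)
    (c : G → D) (hcA : ∀ a ∈ H ⊓ K, ∀ b ∈ H ⊓ K, c (a * b) = c a + c b)
    (β : AbTensor (↥H ⧸ (H ⊓ K).subgroupOf H) (↥K ⧸ (H ⊓ K).subgroupOf K) →+ D)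
    (x y : G) (hx : x ∈ K) (hy : y ∈ K) :
    Fcf σ c β x y = c ((σ x).1 : G) + c ((σ y).1 : G) - c ((σ (x * y)).1 : G) := by
  have hmx : ((σ x).1 : G) ∈ H ⊓ K := s.inK x hx
  have hmy : ((σ y).1 : G) ∈ H ⊓ K := s.inK y hy
  have hmxy : ((σ (x * y)).1 : G) ∈ H ⊓ K := s.inK (x * y) (mul_mem hx hy)
  have hb : Additive.ofMul (Abelianization.of (QuotientGroup.mk
      (s := (H ⊓ K).subgroupOf H) (σ y).1)) = 0 := cls_zero _ hmy
  simp only [Fcf]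
  rw [hb, TensorProduct.zero_tmul, map_zero, add_zero]
  have key : c (((σ (x * y)).1 : G) * alph σ x y) = c ((σ (x * y)).1 : G) + c (alph σ x y) :=
    hcA _ hmxy _ (alph_mem hcomm s x y)
  have hprod : ((σ (x * y)).1 : G) * alph σ x y = ((σ x).1 : G) * ((σ y).1 : G) := by
    simp only [alph]; group
  rw [hprod] at key
  have key2 : c (((σ x).1 : G) * ((σ y).1 : G)) = c ((σ x).1 : G) + c ((σ y).1 : G) :=
    hcA _ hmx _ hmy
  rw [key2] at key
  rw [eq_sub_iff_add_eq, add_comm, key]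

theorem Fcf_pair (hcomm : ∀ h ∈ H, ∀ k ∈ K, Commute h k) (s : IsSec H K σ)
    (c : G → D)
    (β : AbTensor (↥H ⧸ (H ⊓ K).subgroupOf H) (↥K ⧸ (H ⊓ K).subgroupOf K) →+ D)
    (x y : G) (hx : x ∈ H) (hy : y ∈ K) :
    Fcf σ c β x y - Fcf σ c β y x =
      - β (Additive.ofMul (Abelianization.of (QuotientGroup.mk (⟨x, hx⟩ : ↥H))) ⊗ₜ[ℤ]
        Additive.ofMul (Abelianization.of (QuotientGroup.mk (⟨y, hy⟩ : ↥K)))) := by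
  have hxy : y * x = x * y := (hcomm x hx y hy).eq.symm
  have e1 : σ x = (⟨x, hx⟩, 1) := s.eqH x hx
  -- the `c`-parts agree
  have hcpart : alph σ x y = alph σ y x := by
    simp only [alph, hxy, e1]
    show _ * x * ((σ y).1 : G) = _ * ((σ y).1 : G) * x
    rw [mul_assoc, hcomm x hx _ (s.inK y hy).2, ← mul_assoc]
  -- the class of `(σ y).2` equals the class of `y`
  have hsy : Additive.ofMul (Abelianization.of (QuotientGroup.mk
      (s := (H ⊓ K).subgroupOf K) (σ y).2)) =
      Additive.ofMul (Abelianization.of (QuotientGroup.mk (⟨y, hy⟩ : ↥K))) := by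
    have hmem : (((σ y).1 : G))⁻¹ ∈ H ⊓ K := inv_mem (s.inK y hy)
    have hd : (σ y).2 = (⟨(((σ y).1 : G))⁻¹, hmem.2⟩ : ↥K) * ⟨y, hy⟩ := by
      apply Subtype.ext
      show ((σ y).2 : G) = (((σ y).1 : G))⁻¹ * y
      rw [eq_inv_mul_iff_mul_eq]
      exact s.mul y
    have hmem' : (⟨(((σ y).1 : G))⁻¹, hmem.2⟩ : ↥K) ∈ (H ⊓ K).subgroupOf K :=
      Subgroup.mem_subgroupOf.mpr hmem
    rw [hd, cls_mul, cls_zero _ hmem', zero_add]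
  have hbx : Additive.ofMul (Abelianization.of (QuotientGroup.mk
      (s := (H ⊓ K).subgroupOf H) (σ x).1)) =
      Additive.ofMul (Abelianization.of (QuotientGroup.mk (⟨x, hx⟩ : ↥H))) := by
    rw [e1]
  have hb1 : Additive.ofMul (Abelianization.of (QuotientGroup.mk
      (s := (H ⊓ K).subgroupOf K) (σ x).2)) = 0 := by
    rw [e1]
    show Additive.ofMul (Abelianization.of (QuotientGroup.mk (1 : ↥K))) = 0
    exact cls_zero _ (one_mem _)
  have hb2 : Additive.ofMul (Abelianization.of (QuotientGroup.mk
      (s := (H ⊓ K).subgroupOf H) (σ y).1)) = 0 := cls_zero _ (s.inK y hy)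
  simp only [Fcf]
  rw [hcpart, hb2, TensorProduct.zero_tmul, map_zero, hbx, hsy]
  abel

end FcSection

section Assembly

variable {σ : G → ↥H × ↥K}

theorem v_one {v : G → D} {J : Subgroup G}
    (hv : ∀ x ∈ J, ∀ y ∈ J, v (x * y) = v x + v y) : v (1 : G) = 0 := by
  have := hv 1 (one_mem _) 1 (one_mem _)
  rw [mul_one] at this
  exact right_eq_add.mp this

theorem v_inv {v : G → D} {J : Subgroup G}
    (hv : ∀ x ∈ J, ∀ y ∈ J, v (x * y) = v x + v y) {a : G} (ha : a ∈ J) :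
    v a⁻¹ = - v a := by
  have h2 := hv a ha a⁻¹ (inv_mem ha)
  rw [mul_inv_cancel, v_one hv] at h2
  exact eq_neg_of_add_eq_zero_right h2.symm

theorem Fc_kills [DivisibleBy D ℤ] (hcomm : ∀ h ∈ H, ∀ k ∈ K, Commute h k)
    (s : IsSec H K σ) (c : G → D)
    (hcA : ∀ a ∈ H ⊓ K, ∀ b ∈ H ⊓ K, c (a * b) = c a + c b)
    (hZ : ∀ z ∈ ⁅H, H⁆ ⊓ ⁅K, K⁆, c z = 0) :
    ∃ φ : G → D, ∀ g₁ g₂ : G, c (alph σ g₁ g₂) = φ g₁ + φ g₂ - φ (g₁ * g₂) := by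
  obtain ⟨u, v, hu, hv, huv⟩ := exists_uv hcomm c hcA hZ
  refine ⟨fun g => u ((σ g).1 : G) + v ((σ g).2 : G), fun g₁ g₂ => ?_⟩
  have hmem := alph_mem hcomm s g₁ g₂
  have hvinv : v (alph σ g₁ g₂)⁻¹ = - v (alph σ g₁ g₂) := v_inv hv hmem.2
  have e_u : u ((σ (g₁ * g₂)).1 : G) =
      u ((σ g₁).1 : G) + u ((σ g₂).1 : G) - u (alph σ g₁ g₂) := by
    have h1 : u (((σ g₁).1 : G) * ((σ g₂).1 : G)) = u ((σ g₁).1 : G) + u ((σ g₂).1 : G) :=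
      hu _ (σ g₁).1.2 _ (σ g₂).1.2
    have h2 : u (((σ (g₁ * g₂)).1 : G) * alph σ g₁ g₂) =
        u ((σ (g₁ * g₂)).1 : G) + u (alph σ g₁ g₂) := hu _ (σ (g₁ * g₂)).1.2 _ hmem.1
    have h3 : ((σ (g₁ * g₂)).1 : G) * alph σ g₁ g₂ = ((σ g₁).1 : G) * ((σ g₂).1 : G) := by
      simp only [alph]; group
    rw [h3, h1] at h2
    exact eq_sub_of_add_eq h2.symm
  have e_v : v ((σ (g₁ * g₂)).2 : G) =
      v (alph σ g₁ g₂) + v ((σ g₁).2 : G) + v ((σ g₂).2 : G) := by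
    have h1 : v (((σ g₁).2 : G) * ((σ g₂).2 : G)) = v ((σ g₁).2 : G) + v ((σ g₂).2 : G) :=
      hv _ (σ g₁).2.2 _ (σ g₂).2.2
    have h2 : v (alph σ g₁ g₂ * (((σ g₁).2 : G) * ((σ g₂).2 : G))) =
        v (alph σ g₁ g₂) + v (((σ g₁).2 : G) * ((σ g₂).2 : G)) :=
      hv _ hmem.2 _ (mul_mem (σ g₁).2.2 (σ g₂).2.2)
    rw [← sigma2_eq hcomm s g₁ g₂, h1] at h2
    exact h2.trans (add_assoc _ _ _).symm
  have e_c := huv _ hmem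
  dsimp only
  rw [e_c, hvinv, e_u, e_v]
  abel

theorem split_core (f : G → G → D)
    (hf : ∀ g h k : G, f g h + f (g * h) k = f h k + f g (h * k))
    (h₁ k₁ h₂ k₂ h₁₂ k₁₂ a : G)
    (R1 : h₁ * h₂ = h₁₂ * a)
    (R2 : k₁₂ = a * (k₁ * k₂))
    (C1 : k₁ * h₂ = h₂ * k₁)
    (P : f k₁ h₂ = f h₂ k₁) :
    f (h₁ * k₁) (h₂ * k₂) = f h₁ h₂ + f k₁ k₂ - f h₁₂ a + f a (k₁ * k₂) +
      f h₁₂ k₁₂ - f h₁ k₁ - f h₂ k₂ := by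
  have i := hf h₁ k₁ (h₂ * k₂)
  have e_i : f (h₁ * k₁) (h₂ * k₂) =
      f k₁ (h₂ * k₂) + f h₁ (k₁ * (h₂ * k₂)) - f h₁ k₁ := shuffle' i
  have ii := hf k₁ h₂ k₂
  rw [C1, P] at ii
  have e_ii : f k₁ (h₂ * k₂) = f h₂ k₁ + f (h₂ * k₁) k₂ - f h₂ k₂ := shuffle ii
  have iii := hf h₂ k₁ k₂
  rw [iii] at e_ii
  have E4 : k₁ * (h₂ * k₂) = h₂ * (k₁ * k₂) := by rw [← mul_assoc, C1, mul_assoc]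
  have iv := hf h₁ h₂ (k₁ * k₂)
  have e_iv : f h₁ (h₂ * (k₁ * k₂)) =
      f h₁ h₂ + f (h₁ * h₂) (k₁ * k₂) - f h₂ (k₁ * k₂) := shuffle iv
  have vi := hf h₁₂ a (k₁ * k₂)
  rw [← R1, ← R2] at vi
  have e_vi : f (h₁ * h₂) (k₁ * k₂) = f a (k₁ * k₂) + f h₁₂ k₁₂ - f h₁₂ a := shuffle' vi
  rw [e_i, e_ii, E4, e_iv, e_vi]
  abel

theorem main_split [DivisibleBy D ℤ] (hcomm : ∀ h ∈ H, ∀ k ∈ K, Commute h k)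
    (s : IsSec H K σ) (f : G → G → D)
    (hf : ∀ g h k : G, f g h + f (g * h) k = f h k + f g (h * k))
    (φH φK : G → D)
    (hφH : ∀ x ∈ H, ∀ y ∈ H, f x y = φH x + φH y - φH (x * y))
    (hφK : ∀ x ∈ K, ∀ y ∈ K, f x y = φK x + φK y - φK (x * y))
    (hpair : ∀ x ∈ H, ∀ y ∈ K, f x y = f y x)
    (hZm : ∀ z ∈ ⁅H, H⁆ ⊓ ⁅K, K⁆, φH z = φK z) :
    ∃ φ : G → D, ∀ g₁ g₂ : G, f g₁ g₂ = φ g₁ + φ g₂ - φ (g₁ * g₂) := by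
  have hδA : ∀ a ∈ H ⊓ K, ∀ b ∈ H ⊓ K,
      (φK (a * b) - φH (a * b)) = (φK a - φH a) + (φK b - φH b) := by
    intro a ha b hb
    have h1 := hφH a ha.1 b hb.1
    have h2 := hφK a ha.2 b hb.2
    have e1 : φH (a * b) = φH a + φH b - f a b := by rw [h1]; abel
    have e2 : φK (a * b) = φK a + φK b - f a b := by rw [h2]; abel
    rw [e1, e2]; abel
  have hδZ : ∀ z ∈ ⁅H, H⁆ ⊓ ⁅K, K⁆, φK z - φH z = 0 := by
    intro z hz
    rw [← hZm z hz, sub_self]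
  obtain ⟨u, v, hu, hv, huv⟩ := exists_uv hcomm (fun g => φK g - φH g) hδA hδZ
  have hcobH : ∀ x ∈ H, ∀ y ∈ H,
      f x y = (φH x + u x) + (φH y + u y) - (φH (x * y) + u (x * y)) := by
    intro x hx y hy
    rw [hu x hx y hy, hφH x hx y hy]; abel
  have hcobK : ∀ x ∈ K, ∀ y ∈ K,
      f x y = (φK x + v x) + (φK y + v y) - (φK (x * y) + v (x * y)) := by
    intro x hx y hy
    rw [hv x hx y hy, hφK x hx y hy]; abel
  have hAeq : ∀ a ∈ H ⊓ K, φK a + v a = φH a + u a := by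
    intro a ha
    have h1 := huv a ha
    have hvinv : v a⁻¹ = - v a := v_inv hv ha.2
    rw [hvinv, ← sub_eq_add_neg] at h1
    exact (sub_eq_sub_iff_add_eq_add.mp h1).trans (add_comm _ _)
  refine ⟨fun g => (φH ((σ g).1 : G) + u ((σ g).1 : G)) +
    (φK ((σ g).2 : G) + v ((σ g).2 : G)) - f ((σ g).1 : G) ((σ g).2 : G),
    fun g₁ g₂ => ?_⟩
  dsimp only
  have hmem := alph_mem hcomm s g₁ g₂
  have R1 : ((σ g₁).1 : G) * ((σ g₂).1 : G) = ((σ (g₁ * g₂)).1 : G) * alph σ g₁ g₂ := by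
    simp only [alph]; group
  have R2 : ((σ (g₁ * g₂)).2 : G) = alph σ g₁ g₂ * (((σ g₁).2 : G) * ((σ g₂).2 : G)) :=
    sigma2_eq hcomm s g₁ g₂
  have C1 : ((σ g₁).2 : G) * ((σ g₂).1 : G) = ((σ g₂).1 : G) * ((σ g₁).2 : G) :=
    (hcomm _ (σ g₂).1.2 _ (σ g₁).2.2).eq.symm
  have P : f ((σ g₁).2 : G) ((σ g₂).1 : G) = f ((σ g₂).1 : G) ((σ g₁).2 : G) :=
    (hpair _ (σ g₂).1.2 _ (σ g₁).2.2).symm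
  have star := split_core f hf ((σ g₁).1 : G) ((σ g₁).2 : G) ((σ g₂).1 : G) ((σ g₂).2 : G)
    ((σ (g₁ * g₂)).1 : G) ((σ (g₁ * g₂)).2 : G) (alph σ g₁ g₂) R1 R2 C1 P
  have hfg : f g₁ g₂ = f (((σ g₁).1 : G) * ((σ g₁).2 : G)) (((σ g₂).1 : G) * ((σ g₂).2 : G)) := by
    rw [s.mul g₁, s.mul g₂]
  rw [hfg, star]
  have eH12 : φH ((σ (g₁ * g₂)).1 : G) + u ((σ (g₁ * g₂)).1 : G) =
      (φH ((σ g₁).1 : G) + u ((σ g₁).1 : G)) + (φH ((σ g₂).1 : G) + u ((σ g₂).1 : G)) -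
      (φH (alph σ g₁ g₂) + u (alph σ g₁ g₂)) - f ((σ g₁).1 : G) ((σ g₂).1 : G) +
      f ((σ (g₁ * g₂)).1 : G) (alph σ g₁ g₂) := by
    have c1 := hcobH _ (σ g₁).1.2 _ (σ g₂).1.2
    have c2 := hcobH _ (σ (g₁ * g₂)).1.2 _ hmem.1
    rw [← R1] at c2
    rw [c1, c2]
    abel
  have eK12 : φK ((σ (g₁ * g₂)).2 : G) + v ((σ (g₁ * g₂)).2 : G) =
      (φK (alph σ g₁ g₂) + v (alph σ g₁ g₂)) + (φK ((σ g₁).2 : G) + v ((σ g₁).2 : G)) +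
      (φK ((σ g₂).2 : G) + v ((σ g₂).2 : G)) - f ((σ g₁).2 : G) ((σ g₂).2 : G) -
      f (alph σ g₁ g₂) (((σ g₁).2 : G) * ((σ g₂).2 : G)) := by
    have c3 := hcobK _ (σ g₁).2.2 _ (σ g₂).2.2
    have c4 := hcobK _ hmem.2 _ (mul_mem (σ g₁).2.2 (σ g₂).2.2)
    rw [← R2] at c4
    rw [c3, c4]
    abel
  rw [eH12, eK12, hAeq _ hmem]
  abel

end Assembly

section MkLemmas

theorem H2mk_eq_of (f₁ f₂ : cocycles2 G D) (φ : G → D)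
    (hw : ∀ g₁ g₂ : G, (f₁ : G → G → D) g₁ g₂ =
      (f₂ : G → G → D) g₁ g₂ + (φ g₁ + φ g₂ - φ (g₁ * g₂))) :
    H2mk f₁ = H2mk f₂ := by
  show (QuotientAddGroup.mk f₁ : cocycles2 G D ⧸ (coboundaries2 G D).addSubgroupOf (cocycles2 G D)) = QuotientAddGroup.mk f₂
  rw [QuotientAddGroup.eq, AddSubgroup.mem_addSubgroupOf]
  refine ⟨fun g => -φ g, fun g₁ g₂ => ?_⟩
  show -((f₁ : G → G → D) g₁ g₂) + (f₂ : G → G → D) g₁ g₂ = _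
  rw [hw g₁ g₂]
  beta_reduce
  abel

theorem res_zero_iff {J : Subgroup G} (f : cocycles2 G D) :
    H2Map J.subtype (H2mk f) = 0 ↔
      ∃ φ : ↥J → D, ∀ x y : ↥J, (f : G → G → D) x y = φ x + φ y - φ (x * y) := by
  have h0 : H2Map J.subtype (H2mk f) = H2mk (pullCocycle J.subtype f) := rfl
  rw [h0]
  show (QuotientAddGroup.mk (pullCocycle J.subtype f) : cocycles2 ↥J D ⧸ (coboundaries2 ↥J D).addSubgroupOf (cocycles2 ↥J D)) = 0 ↔ _
  rw [QuotientAddGroup.eq_zero_iff, AddSubgroup.mem_addSubgroupOf]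
  exact Iff.rfl

end MkLemmas

end Helpers

/-- There is an injective homomorphism `Hom(Z, D) ⊕ Hom(H/A ⊗ K/A, D) → H²(G, D)`
whose image is the kernel of `(res, res) : H²(G, D) → H²(H, D) ⊕ H²(K, D)`.
In particular `Hom(Z, D) ⊕ Hom(H/A ⊗ K/A, D)` embeds in `H²(G, D)`. -/
theorem homZ_oplus_homTensor_embeds {G : Type} [Group G] (H K : Subgroup G) [H.Normal] [K.Normal]
    (hprod : H ⊔ K = ⊤) (hcomm : ∀ h ∈ H, ∀ k ∈ K, Commute h k)
    (D : Type) [AddCommGroup D] [DivisibleBy D ℤ]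
    [((H ⊓ K).subgroupOf H).Normal] [((H ⊓ K).subgroupOf K).Normal] :
    ∃ ι : ((Additive ↥(⁅H, H⁆ ⊓ ⁅K, K⁆) →+ D) ×
        (AbTensor (↥H ⧸ (H ⊓ K).subgroupOf H) (↥K ⧸ (H ⊓ K).subgroupOf K) →+ D)) →+
      H2 G D,
      Function.Injective ι ∧
      ∀ ξ : H2 G D, ξ ∈ Set.range ι ↔ (H2Map H.subtype ξ = 0 ∧ H2Map K.subtype ξ = 0) := by
  classical
  obtain ⟨σ, s⟩ := exists_sec (H := H) (K := K) hprod
  have hcen : ∀ a ∈ H ⊓ K, ∀ g : G, a * g = g * a := fun a ha g => mem_central hcomm hprod ha g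
  choose ext hextA hextZ using fun γ : Additive ↥(⁅H, H⁆ ⊓ ⁅K, K⁆) →+ D =>
    exists_ext (D := D) hcomm γ
  refine ⟨AddMonoidHom.mk' (fun p : ((Additive ↥(⁅H, H⁆ ⊓ ⁅K, K⁆) →+ D) ×
      (AbTensor (↥H ⧸ (H ⊓ K).subgroupOf H) (↥K ⧸ (H ⊓ K).subgroupOf K) →+ D)) =>
      H2mk ⟨Fcf σ (ext p.1) p.2, Fcf_cocycle hcomm s hcen _ (hextA p.1) p.2⟩) ?_, ?_, ?_⟩
  -- ### additivity
  · intro p q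
    have hcA₀ : ∀ a ∈ H ⊓ K, ∀ b ∈ H ⊓ K,
        (fun g => ext (p.1 + q.1) g - ext p.1 g - ext q.1 g) (a * b) =
        (fun g => ext (p.1 + q.1) g - ext p.1 g - ext q.1 g) a +
        (fun g => ext (p.1 + q.1) g - ext p.1 g - ext q.1 g) b := by
      intro a ha b hb
      dsimp only
      rw [hextA (p.1 + q.1) a ha b hb, hextA p.1 a ha b hb, hextA q.1 a ha b hb]
      abel
    have hZ₀ : ∀ z ∈ ⁅H, H⁆ ⊓ ⁅K, K⁆,
        (fun g => ext (p.1 + q.1) g - ext p.1 g - ext q.1 g) z = 0 := by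
      intro z hz
      dsimp only
      rw [hextZ (p.1 + q.1) z hz, hextZ p.1 z hz, hextZ q.1 z hz,
        AddMonoidHom.add_apply]
      abel
    obtain ⟨φ, hφ⟩ := Fc_kills (σ := σ) hcomm s _ hcA₀ hZ₀
    have hsum : H2mk ⟨Fcf σ (ext p.1) p.2, Fcf_cocycle hcomm s hcen _ (hextA p.1) p.2⟩ +
        H2mk ⟨Fcf σ (ext q.1) q.2, Fcf_cocycle hcomm s hcen _ (hextA q.1) q.2⟩ =
        H2mk (⟨Fcf σ (ext p.1) p.2, Fcf_cocycle hcomm s hcen _ (hextA p.1) p.2⟩ +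
          ⟨Fcf σ (ext q.1) q.2, Fcf_cocycle hcomm s hcen _ (hextA q.1) q.2⟩) := rfl
    rw [hsum]
    apply H2mk_eq_of _ _ φ
    intro g₁ g₂
    show Fcf σ (ext ((p + q).1)) ((p + q).2) g₁ g₂ =
      (Fcf σ (ext p.1) p.2 g₁ g₂ + Fcf σ (ext q.1) q.2 g₁ g₂) +
      (φ g₁ + φ g₂ - φ (g₁ * g₂))
    rw [← hφ g₁ g₂]
    simp only [Fcf]
    show ext (p.1 + q.1) (alph σ g₁ g₂) + (p.2 + q.2) _ = _
    rw [AddMonoidHom.add_apply]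
    abel
  -- ### injectivity
  · rw [injective_iff_map_eq_zero]
    intro p hp
    have hp' : H2mk ⟨Fcf σ (ext p.1) p.2, Fcf_cocycle hcomm s hcen _ (hextA p.1) p.2⟩ = 0 := hp
    have hmem0 := (QuotientAddGroup.eq_zero_iff _).mp hp'
    rw [AddSubgroup.mem_addSubgroupOf] at hmem0
    obtain ⟨φ, hφ⟩ := hmem0
    have hφ' : ∀ g₁ g₂ : G, Fcf σ (ext p.1) p.2 g₁ g₂ = φ g₁ + φ g₂ - φ (g₁ * g₂) := hφ
    have hβgen : ∀ (x : ↥H) (y : ↥K),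
        p.2 (Additive.ofMul (Abelianization.of (QuotientGroup.mk x)) ⊗ₜ[ℤ]
          Additive.ofMul (Abelianization.of (QuotientGroup.mk y))) = 0 := by
      intro x y
      have h1 := Fcf_pair hcomm s (ext p.1) p.2 ↑x ↑y x.2 y.2
      have h2 : Fcf σ (ext p.1) p.2 ↑x ↑y - Fcf σ (ext p.1) p.2 ↑y ↑x = 0 := by
        rw [hφ' ↑x ↑y, hφ' ↑y ↑x]
        have hc : (↑x * ↑y : G) = ↑y * ↑x := (hcomm ↑x x.2 ↑y y.2).eq
        rw [hc]
        abel
      rw [h2] at h1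
      exact neg_eq_zero.mp h1.symm
    have hβ : p.2 = 0 := beta_ext p.2 hβgen
    have hFc : ∀ g₁ g₂ : G, ext p.1 (alph σ g₁ g₂) = φ g₁ + φ g₂ - φ (g₁ * g₂) := by
      intro g₁ g₂
      have h := hφ' g₁ g₂
      simp only [Fcf, hβ, AddMonoidHom.zero_apply, add_zero] at h
      exact h
    have hu : ∀ x ∈ H, ∀ y ∈ H, φ (x * y) = φ x + φ y := by
      intro x hx y hy
      have h := hFc x y
      have halph : alph σ x y = 1 := by
        simp only [alph, s.eqH x hx, s.eqH y hy, s.eqH (x * y) (mul_mem hx hy)]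
        show ((x * y)⁻¹ : G) * x * y = 1
        group
      rw [halph, c_one (ext p.1) (hextA p.1)] at h
      exact (sub_eq_zero.mp h.symm).symm
    have hv : ∀ x ∈ K, ∀ y ∈ K,
        (fun g => φ g - ext p.1 ((σ g).1 : G)) (x * y) =
        (fun g => φ g - ext p.1 ((σ g).1 : G)) x +
        (fun g => φ g - ext p.1 ((σ g).1 : G)) y := by
      intro x hx y hy
      dsimp only
      have h2 := Fcf_resK hcomm s (ext p.1) (hextA p.1) p.2 x y hx hy
      rw [hφ' x y] at h2
      have h3 : φ (x * y) = φ x + φ y -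
          (ext p.1 ((σ x).1 : G) + ext p.1 ((σ y).1 : G) - ext p.1 ((σ (x * y)).1 : G)) := by
        rw [← h2]; abel
      rw [h3]; abel
    have hcz : ∀ z (hz : z ∈ ⁅H, H⁆ ⊓ ⁅K, K⁆), ext p.1 z = 0 := by
      intro z hz
      have hz' : z ∈ H ⊓ K := inf_commutator_le_inf H K hz
      have hu0 : φ z = 0 := kills_commutator φ hu z hz.1
      have hv0 := kills_commutator (J := K) (fun g => φ g - ext p.1 ((σ g).1 : G)) hv z hz.2
      have hσz : ((σ z).1 : G) = z := by rw [s.eqH z hz'.1]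
      rw [hσz, hu0, zero_sub, neg_eq_zero] at hv0
      exact hv0
    have hγ : p.1 = 0 := by
      refine AddMonoidHom.ext fun w => ?_
      show p.1 w = 0
      have hw := hextZ p.1 ↑(Additive.toMul w) (Additive.toMul w).2
      rw [hcz _ (Additive.toMul w).2] at hw
      exact hw.symm
    exact Prod.ext hγ hβ
  -- ### range characterization
  · intro ξ
    constructor
    · rintro ⟨p, rfl⟩
      constructor
      · apply (res_zero_iff (J := H)
          ⟨Fcf σ (ext p.1) p.2, Fcf_cocycle hcomm s hcen _ (hextA p.1) p.2⟩).mpr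
        refine ⟨fun _ => 0, fun x y => ?_⟩
        show Fcf σ (ext p.1) p.2 ↑x ↑y = 0 + 0 - 0
        rw [Fcf_resH s (ext p.1) (hextA p.1) p.2 ↑x ↑y x.2 y.2]
        simp
      · apply (res_zero_iff (J := K)
          ⟨Fcf σ (ext p.1) p.2, Fcf_cocycle hcomm s hcen _ (hextA p.1) p.2⟩).mpr
        refine ⟨fun x => ext p.1 ((σ (x : G)).1 : G), fun x y => ?_⟩
        show Fcf σ (ext p.1) p.2 ↑x ↑y = _
        exact Fcf_resK hcomm s (ext p.1) (hextA p.1) p.2 ↑x ↑y x.2 y.2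
    · rintro ⟨hH0, hK0⟩
      obtain ⟨fc, rfl⟩ := QuotientAddGroup.mk_surjective ξ
      obtain ⟨φH, hφH⟩ := (res_zero_iff fc).mp hH0
      obtain ⟨φK, hφK⟩ := (res_zero_iff fc).mp hK0
      have hf : ∀ g h k : G, (fc : G → G → D) g h + (fc : G → G → D) (g * h) k =
          (fc : G → G → D) h k + (fc : G → G → D) g (h * k) := fc.2
      -- the pairing homomorphism
      obtain ⟨β₀, hβ₀⟩ := exists_beta
        (fun (x : ↥H) (y : ↥K) => (fc : G → G → D) ↑y ↑x - (fc : G → G → D) ↑x ↑y)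
        (fun x₁ x₂ y => pairing_mul hf ↑x₁ ↑x₂ ↑y
          ((hcomm ↑x₁ x₁.2 ↑y y.2).eq.symm) ((hcomm ↑x₂ x₂.2 ↑y y.2).eq.symm))
        (fun x y₁ y₂ => by
          have h := pairing_mul hf ↑y₁ ↑y₂ ↑x
            ((hcomm ↑x x.2 ↑y₁ y₁.2).eq) ((hcomm ↑x x.2 ↑y₂ y₂.2).eq)
          have h2 : (fc : G → G → D) (↑y₁ * ↑y₂) ↑x - (fc : G → G → D) ↑x (↑y₁ * ↑y₂) =
              -((fc : G → G → D) ↑x (↑y₁ * ↑y₂) - (fc : G → G → D) (↑y₁ * ↑y₂) ↑x) := by abel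
          show (fc : G → G → D) (↑y₁ * ↑y₂) ↑x - (fc : G → G → D) ↑x (↑y₁ * ↑y₂) = _
          rw [h2, h]
          abel)
        (fun x y hx => by
          have c : (↑x : G) * ↑y = ↑y * ↑x := hcen _ hx ↑y
          have h1 : (fc : G → G → D) ↑x ↑y =
              φK ⟨↑x, hx.2⟩ + φK y - φK ⟨↑x * ↑y, mul_mem hx.2 y.2⟩ := hφK ⟨↑x, hx.2⟩ y
          have h2 : (fc : G → G → D) ↑y ↑x =
              φK y + φK ⟨↑x, hx.2⟩ - φK ⟨↑y * ↑x, mul_mem y.2 hx.2⟩ := hφK y ⟨↑x, hx.2⟩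
          have h3 : φK ⟨↑y * ↑x, mul_mem y.2 hx.2⟩ = φK ⟨↑x * ↑y, mul_mem hx.2 y.2⟩ := by
            congr 1
            exact Subtype.ext c.symm
          rw [h1, h2, h3]
          abel)
        (fun x y hy => by
          have c : (↑x : G) * ↑y = ↑y * ↑x := (hcen _ hy ↑x).symm
          have h1 : (fc : G → G → D) ↑x ↑y =
              φH x + φH ⟨↑y, hy.1⟩ - φH ⟨↑x * ↑y, mul_mem x.2 hy.1⟩ := hφH x ⟨↑y, hy.1⟩
          have h2 : (fc : G → G → D) ↑y ↑x =
              φH ⟨↑y, hy.1⟩ + φH x - φH ⟨↑y * ↑x, mul_mem hy.1 x.2⟩ := hφH ⟨↑y, hy.1⟩ x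
          have h3 : φH ⟨↑y * ↑x, mul_mem hy.1 x.2⟩ = φH ⟨↑x * ↑y, mul_mem x.2 hy.1⟩ := by
            congr 1
            exact Subtype.ext c.symm
          rw [h1, h2, h3]
          abel)
      -- the Z-component
      have hγadd : ∀ a b : Additive ↥(⁅H, H⁆ ⊓ ⁅K, K⁆),
          (fun t : Additive ↥(⁅H, H⁆ ⊓ ⁅K, K⁆) =>
            (if hg : (↑(Additive.toMul t) : G) ∈ K then φK ⟨↑(Additive.toMul t), hg⟩ else 0) -
            (if hg : (↑(Additive.toMul t) : G) ∈ H then φH ⟨↑(Additive.toMul t), hg⟩ else 0))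
            (a + b) =
          (fun t : Additive ↥(⁅H, H⁆ ⊓ ⁅K, K⁆) =>
            (if hg : (↑(Additive.toMul t) : G) ∈ K then φK ⟨↑(Additive.toMul t), hg⟩ else 0) -
            (if hg : (↑(Additive.toMul t) : G) ∈ H then φH ⟨↑(Additive.toMul t), hg⟩ else 0)) a +
          (fun t : Additive ↥(⁅H, H⁆ ⊓ ⁅K, K⁆) =>
            (if hg : (↑(Additive.toMul t) : G) ∈ K then φK ⟨↑(Additive.toMul t), hg⟩ else 0) -
            (if hg : (↑(Additive.toMul t) : G) ∈ H then φH ⟨↑(Additive.toMul t), hg⟩ else 0)) b := by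
        intro a b
        have hA : (↑(Additive.toMul a) : G) ∈ H ⊓ K :=
          inf_commutator_le_inf H K (Additive.toMul a).2
        have hB : (↑(Additive.toMul b) : G) ∈ H ⊓ K :=
          inf_commutator_le_inf H K (Additive.toMul b).2
        have hA1 : (↑(Additive.toMul a) : G) ∈ H := hA.1
        have hA2 : (↑(Additive.toMul a) : G) ∈ K := hA.2
        have hB1 : (↑(Additive.toMul b) : G) ∈ H := hB.1
        have hB2 : (↑(Additive.toMul b) : G) ∈ K := hB.2
        have hAB1 : (↑(Additive.toMul a) * ↑(Additive.toMul b) : G) ∈ H := mul_mem hA1 hB1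
        have hAB2 : (↑(Additive.toMul a) * ↑(Additive.toMul b) : G) ∈ K := mul_mem hA2 hB2
        show (if hg : (↑(Additive.toMul a) * ↑(Additive.toMul b) : G) ∈ K then
            φK ⟨↑(Additive.toMul a) * ↑(Additive.toMul b), hg⟩ else 0) -
          (if hg : (↑(Additive.toMul a) * ↑(Additive.toMul b) : G) ∈ H then
            φH ⟨↑(Additive.toMul a) * ↑(Additive.toMul b), hg⟩ else 0) = _
        rw [dif_pos hAB2, dif_pos hAB1]
        dsimp only
        rw [dif_pos hA2, dif_pos hB2, dif_pos hA1, dif_pos hB1]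
        have e1 : (fc : G → G → D) ↑(Additive.toMul a) ↑(Additive.toMul b) =
            φH ⟨↑(Additive.toMul a), hA1⟩ + φH ⟨↑(Additive.toMul b), hB1⟩ -
            φH ⟨↑(Additive.toMul a) * ↑(Additive.toMul b), hAB1⟩ :=
          hφH ⟨↑(Additive.toMul a), hA1⟩ ⟨↑(Additive.toMul b), hB1⟩
        have e2 : (fc : G → G → D) ↑(Additive.toMul a) ↑(Additive.toMul b) =
            φK ⟨↑(Additive.toMul a), hA2⟩ + φK ⟨↑(Additive.toMul b), hB2⟩ -
            φK ⟨↑(Additive.toMul a) * ↑(Additive.toMul b), hAB2⟩ :=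
          hφK ⟨↑(Additive.toMul a), hA2⟩ ⟨↑(Additive.toMul b), hB2⟩
        have e1' : φH ⟨↑(Additive.toMul a) * ↑(Additive.toMul b), hAB1⟩ =
            φH ⟨↑(Additive.toMul a), hA1⟩ + φH ⟨↑(Additive.toMul b), hB1⟩ -
            (fc : G → G → D) ↑(Additive.toMul a) ↑(Additive.toMul b) := by
          rw [e1]; abel
        have e2' : φK ⟨↑(Additive.toMul a) * ↑(Additive.toMul b), hAB2⟩ =
            φK ⟨↑(Additive.toMul a), hA2⟩ + φK ⟨↑(Additive.toMul b), hB2⟩ -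
            (fc : G → G → D) ↑(Additive.toMul a) ↑(Additive.toMul b) := by
          rw [e2]; abel
        rw [e1', e2']
        abel
      refine ⟨(AddMonoidHom.mk' (fun t : Additive ↥(⁅H, H⁆ ⊓ ⁅K, K⁆) =>
            (if hg : (↑(Additive.toMul t) : G) ∈ K then φK ⟨↑(Additive.toMul t), hg⟩ else 0) -
            (if hg : (↑(Additive.toMul t) : G) ∈ H then φH ⟨↑(Additive.toMul t), hg⟩ else 0)) hγadd, β₀), ?_⟩
      set γ₀ : Additive ↥(⁅H, H⁆ ⊓ ⁅K, K⁆) →+ D := AddMonoidHom.mk' (fun t : Additive ↥(⁅H, H⁆ ⊓ ⁅K, K⁆) =>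
            (if hg : (↑(Additive.toMul t) : G) ∈ K then φK ⟨↑(Additive.toMul t), hg⟩ else 0) -
            (if hg : (↑(Additive.toMul t) : G) ∈ H then φH ⟨↑(Additive.toMul t), hg⟩ else 0)) hγadd with hγ₀def
      -- the difference is a coboundary by `main_split`
      have hf' : ∀ g h k : G,
          (fun g₁ g₂ => (fc : G → G → D) g₁ g₂ - Fcf σ (ext γ₀) β₀ g₁ g₂) g h +
          (fun g₁ g₂ => (fc : G → G → D) g₁ g₂ - Fcf σ (ext γ₀) β₀ g₁ g₂) (g * h) k =
          (fun g₁ g₂ => (fc : G → G → D) g₁ g₂ - Fcf σ (ext γ₀) β₀ g₁ g₂) h k +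
          (fun g₁ g₂ => (fc : G → G → D) g₁ g₂ - Fcf σ (ext γ₀) β₀ g₁ g₂) g (h * k) := by
        intro g h k
        dsimp only
        have a := hf g h k
        have b := Fcf_cocycle hcomm s hcen (ext γ₀) (hextA γ₀) β₀ g h k
        rw [show (fc : G → G → D) g h - Fcf σ (ext γ₀) β₀ g h +
            ((fc : G → G → D) (g * h) k - Fcf σ (ext γ₀) β₀ (g * h) k) =
            ((fc : G → G → D) g h + (fc : G → G → D) (g * h) k) -
            (Fcf σ (ext γ₀) β₀ g h + Fcf σ (ext γ₀) β₀ (g * h) k) from by abel, a, b]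
        abel
      obtain ⟨φ, hcob⟩ := main_split hcomm s
        (fun g₁ g₂ => (fc : G → G → D) g₁ g₂ - Fcf σ (ext γ₀) β₀ g₁ g₂) hf'
        (fun g => if hg : g ∈ H then φH ⟨g, hg⟩ else 0)
        (fun g => (if hg : g ∈ K then φK ⟨g, hg⟩ else 0) - ext γ₀ ((σ g).1 : G))
        (by
          intro x hx y hy
          rw [Fcf_resH s (ext γ₀) (hextA γ₀) β₀ x y hx hy, sub_zero,
            dif_pos hx, dif_pos hy, dif_pos (mul_mem hx hy)]
          exact hφH ⟨x, hx⟩ ⟨y, hy⟩)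
        (by
          intro x hx y hy
          rw [Fcf_resK hcomm s (ext γ₀) (hextA γ₀) β₀ x y hx hy,
            dif_pos hx, dif_pos hy, dif_pos (mul_mem hx hy)]
          have h5 : (fc : G → G → D) x y =
              φK ⟨x, hx⟩ + φK ⟨y, hy⟩ - φK ⟨x * y, mul_mem hx hy⟩ := hφK ⟨x, hx⟩ ⟨y, hy⟩
          rw [h5]
          abel)
        (by
          intro x hx y hy
          have h1 := Fcf_pair hcomm s (ext γ₀) β₀ x y hx hy
          have h2 : β₀ (Additive.ofMul (Abelianization.of (QuotientGroup.mk
              (⟨x, hx⟩ : ↥H))) ⊗ₜ[ℤ] Additive.ofMul (Abelianization.of (QuotientGroup.mk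
              (⟨y, hy⟩ : ↥K)))) = (fc : G → G → D) y x - (fc : G → G → D) x y :=
            hβ₀ ⟨x, hx⟩ ⟨y, hy⟩
          rw [h2] at h1
          have h3 : Fcf σ (ext γ₀) β₀ x y - Fcf σ (ext γ₀) β₀ y x =
              (fc : G → G → D) x y - (fc : G → G → D) y x := by
            rw [h1]; abel
          have h4 := sub_eq_sub_iff_add_eq_add.mp h3
          exact sub_eq_sub_iff_add_eq_add.mpr (h4.symm.trans (add_comm _ _)))
        (by
          intro z hz
          have hz' : z ∈ H ⊓ K := inf_commutator_le_inf H K hz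
          have hσz : ((σ z).1 : G) = z := by rw [s.eqH z hz'.1]
          rw [hσz, hextZ γ₀ z hz]
          have hval : γ₀ (Additive.ofMul (⟨z, hz⟩ : ↥(⁅H, H⁆ ⊓ ⁅K, K⁆))) =
              (if hg : z ∈ K then φK ⟨z, hg⟩ else 0) -
              (if hg : z ∈ H then φH ⟨z, hg⟩ else 0) := rfl
          rw [hval]
          abel)
      show H2mk ⟨Fcf σ (ext γ₀) β₀, Fcf_cocycle hcomm s hcen _ (hextA γ₀) β₀⟩ = H2mk fc
      apply H2mk_eq_of _ _ (fun g => -φ g)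
      intro g₁ g₂
      have h := hcob g₁ g₂
      show Fcf σ (ext γ₀) β₀ g₁ g₂ =
        (fc : G → G → D) g₁ g₂ + (-φ g₁ + -φ g₂ - -φ (g₁ * g₂))
      rw [show Fcf σ (ext γ₀) β₀ g₁ g₂ = (fc : G → G → D) g₁ g₂ -
        ((fc : G → G → D) g₁ g₂ - Fcf σ (ext γ₀) β₀ g₁ g₂) from by abel, h]
      abel


end SchurCP
end

section
/- Assume Z = [H,H] ∩ [K,K] = 1. Let ξ ∈ H²(G, D) with θ'(ξ) = (ξ₁, ξ₂, t), and suppose that either the restriction of ξ₁ to A is 0 or the restriction of ξ₂ to A is 0. Then the following are equivalent: (i) ξ lies in the image of the inflation map H²(G/A, D) → H²(G, D); (ii) t(h[H,H] ⊗ a[K,K]) = 0 and t(a[H,H] ⊗ k[K,K]) = 0 for all h ∈ H, k ∈ K, a ∈ A; (iii) ψ_A(ξ₁) = 0 and ψ_A(ξ₂) = 0, where for a group X with central subgroup A and η ∈ H²(X, D) represented by a 2-cocycle f, ψ_A(η) ∈ Hom((X/[X,X]) ⊗ A, D) is defined by ψ_A(η)(x[X,X] ⊗ a) = f(x, a) −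 f(a, x). -/
/-!
Setting (central products): `G` is a group with normal subgroups `H` and `K` such that
`G = HK` (i.e. `H ⊔ K = ⊤`) and `[H, K] = 1` (i.e. every element of `H` commutes with
every element of `K`).  We set `A = H ⊓ K` and `Z = ⁅H,H⁆ ⊓ ⁅K,K⁆`; both are central
in `G`.  Coefficients are taken in a divisible abelian group `D`, regarded as a trivial
module.  Second cohomology `H2 X D` is realized concretely as (inhomogeneous)
2-cocycles modulo 2-coboundaries, and `Hom(X, D)` is realized as `Additive X →+ D`.
-/

open scoped TensorProduct

set_option maxHeartbeats 1000000
set_option synthInstance.maxHeartbeats 1000000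
set_option synthInstance.maxSize 2000

namespace SchurCP

variable (G : Type) [Group G] (D : Type) [AddCommGroup D]

variable {G D}

open scoped Pointwise

theorem mem_coboundaries2_iff {f : G → G → D} :
    f ∈ coboundaries2 G D ↔ ∃ φ : G → D, ∀ g h : G, f g h = φ g + φ h - φ (g * h) :=
  Iff.rfl

theorem H2Map_mk {G' : Type} [Group G'] (π : G' →* G) (f : cocycles2 G D) :
    H2Map π (H2mk f) = H2mk (pullCocycle π f) := rfl

theorem H2mk_eq_iff {u v : cocycles2 G D} :
    H2mk u = H2mk v ↔ ∃ φ : G → D, ∀ g h : G,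
      (u : G → G → D) g h - (v : G → G → D) g h = φ g + φ h - φ (g * h) := by
  show (QuotientAddGroup.mk u : cocycles2 G D ⧸ (coboundaries2 G D).addSubgroupOf (cocycles2 G D)) = QuotientAddGroup.mk v ↔ _
  rw [QuotientAddGroup.eq_iff_sub_mem, AddSubgroup.mem_addSubgroupOf]
  constructor
  · rintro ⟨φ, hφ⟩
    exact ⟨φ, fun g h => by simpa using hφ g h⟩
  · rintro ⟨φ, hφ⟩
    exact ⟨φ, fun g h => by simpa using hφ g h⟩

theorem H2mk_eq_zero_iff {u : cocycles2 G D} :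
    H2mk u = 0 ↔ ∃ φ : G → D, ∀ g h : G,
      (u : G → G → D) g h = φ g + φ h - φ (g * h) := by
  show (QuotientAddGroup.mk u : cocycles2 G D ⧸ (coboundaries2 G D).addSubgroupOf (cocycles2 G D)) = 0 ↔ _
  rw [QuotientAddGroup.eq_zero_iff, AddSubgroup.mem_addSubgroupOf]
  exact Iff.rfl

theorem coc_one_right (f : cocycles2 G D) (g : G) :
    (f : G → G → D) g 1 = (f : G → G → D) 1 1 := by
  have h := f.2 g 1 1
  simp only [mul_one, one_mul] at h
  exact add_right_cancel h

theorem coc_one_left (f : cocycles2 G D) (k : G) :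
    (f : G → G → D) 1 k = (f : G → G → D) 1 1 := by
  have h := f.2 1 1 k
  simp only [mul_one, one_mul] at h
  rw [add_comm ((f : G → G → D) 1 1)] at h
  exact (add_left_cancel h).symm

theorem lambda_mul (f : cocycles2 G D) {a : G} (ha : ∀ g : G, a * g = g * a) (g g' : G) :
    (f : G → G → D) (g * g') a - (f : G → G → D) a (g * g') =
      ((f : G → G → D) g a - (f : G → G → D) a g) +
      ((f : G → G → D) g' a - (f : G → G → D) a g') := by
  have c1 := f.2 g g' a
  have c2 := f.2 g a g'
  have c3 := f.2 a g g'
  rw [← ha g'] at c1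
  rw [ha g] at c3
  have comb : ((f : G → G → D) (g * g') a - (f : G → G → D) a (g * g')) -
      (((f : G → G → D) g a - (f : G → G → D) a g) +
       ((f : G → G → D) g' a - (f : G → G → D) a g')) =
      ((f : G → G → D) g g' + (f : G → G → D) (g * g') a -
        ((f : G → G → D) g' a + (f : G → G → D) g (a * g'))) -
      ((f : G → G → D) g a + (f : G → G → D) (g * a) g' -
        ((f : G → G → D) a g' + (f : G → G → D) g (a * g'))) +
      ((f : G → G → D) a g + (f : G → G → D) (g * a) g' -
        ((f : G → G → D) g g' + (f : G → G → D) a (g * g'))) := by abel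
  rw [sub_eq_zero_of_eq c1, sub_eq_zero_of_eq c2, sub_eq_zero_of_eq c3] at comb
  simp only [zero_sub, neg_zero, add_zero, zero_add] at comb
  exact sub_eq_zero.mp comb

theorem infl_iff (A : Subgroup G) [A.Normal]
    (hA : ∀ a ∈ A, ∀ g : G, a * g = g * a) (f : cocycles2 G D) :
    (H2mk f ∈ Set.range (H2Map (QuotientGroup.mk' A) : H2 (G ⧸ A) D →+ H2 G D)) ↔
    ((∃ φ₀ : G → D, ∀ a ∈ A, ∀ b ∈ A,
        (f : G → G → D) a b = φ₀ a + φ₀ b - φ₀ (a * b)) ∧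
     (∀ g : G, ∀ a ∈ A, (f : G → G → D) g a = (f : G → G → D) a g)) := by
  constructor
  · rintro ⟨η, hη⟩
    obtain ⟨F, rfl⟩ := QuotientAddGroup.mk_surjective η
    rw [H2Map_mk, H2mk_eq_iff] at hη
    obtain ⟨φ, hφ⟩ := hη
    -- hφ : pull F g h - f g h = φ g + φ h - φ (g*h)
    have hval : ∀ g h : G, (f : G → G → D) g h =
        (F : (G ⧸ A) → (G ⧸ A) → D) (QuotientGroup.mk g) (QuotientGroup.mk h)
          - (φ g + φ h - φ (g * h)) := by
      intro g h
      have h1 := hφ g h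
      rw [sub_eq_iff_eq_add] at h1
      refine eq_sub_iff_add_eq.mpr ?_
      rw [add_comm]
      exact h1.symm
    have hmk1 : ∀ a ∈ A, (QuotientGroup.mk a : G ⧸ A) = 1 := fun a ha =>
      (QuotientGroup.eq_one_iff a).mpr ha
    constructor
    · refine ⟨fun x => -(φ x) + (F : (G ⧸ A) → (G ⧸ A) → D) 1 1, ?_⟩
      intro a ha b hb
      rw [hval a b, hmk1 a ha, hmk1 b hb]
      have : (QuotientGroup.mk (a * b) : G ⧸ A) = 1 := hmk1 _ (A.mul_mem ha hb)
      beta_reduce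
      abel
    · intro g a ha
      rw [hval g a, hval a g, hmk1 a ha, hA a ha g,
        coc_one_left F (QuotientGroup.mk g), coc_one_right F (QuotientGroup.mk g)]
      abel
  · rintro ⟨⟨φ₀, hφ₀⟩, hsymm⟩
    classical
    have hout : ∀ u : G ⧸ A, (QuotientGroup.mk u.out : G ⧸ A) = u := fun u =>
      QuotientGroup.out_eq' u
    set n : G → G := fun x => (QuotientGroup.mk x : G ⧸ A).out⁻¹ * x with hn_def
    have hnA : ∀ x : G, n x ∈ A := by
      intro x
      have h := hout (QuotientGroup.mk x)
      rwa [QuotientGroup.eq] at h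
    have hxn : ∀ x : G, (QuotientGroup.mk x : G ⧸ A).out * n x = x := fun x =>
      mul_inv_cancel_left _ _
    have hmk_mul : ∀ (y a : G), a ∈ A →
        (QuotientGroup.mk (y * a) : G ⧸ A) = QuotientGroup.mk y := fun y a ha =>
      QuotientGroup.mk_mul_of_mem y ha
    set φ : G → D := fun x =>
      φ₀ (n x) - (f : G → G → D) (QuotientGroup.mk x : G ⧸ A).out (n x) with hφ_def
    have hstar : ∀ (y a : G), a ∈ A →
        φ (y * a) = φ y + φ₀ a - (f : G → G → D) y a := by
      intro y a ha
      have hmk : (QuotientGroup.mk (y * a) : G ⧸ A) = QuotientGroup.mk y := hmk_mul y a ha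
      have hn2 : n (y * a) = n y * a := by
        show (QuotientGroup.mk (y * a) : G ⧸ A).out⁻¹ * (y * a) = _
        rw [hmk, mul_assoc]
      have hc := f.2 (QuotientGroup.mk y : G ⧸ A).out (n y) a
      rw [hxn y] at hc
      have hA2 : (f : G → G → D) (n y) a = φ₀ (n y) + φ₀ a - φ₀ (n y * a) :=
        hφ₀ _ (hnA y) _ ha
      show φ₀ (n (y * a)) - (f : G → G → D) (QuotientGroup.mk (y*a) : G ⧸ A).out (n (y*a)) = _
      rw [hn2, hmk]
      have comb : (φ₀ (n y * a) - (f : G → G → D) (QuotientGroup.mk y : G ⧸ A).out (n y * a))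
          - ((φ₀ (n y) - (f : G → G → D) (QuotientGroup.mk y : G ⧸ A).out (n y)) + φ₀ a
             - (f : G → G → D) y a) =
          ((f : G → G → D) (n y) a - (φ₀ (n y) + φ₀ a - φ₀ (n y * a))) +
          (((f : G → G → D) (QuotientGroup.mk y : G ⧸ A).out (n y) + (f : G → G → D) y a) -
           ((f : G → G → D) (n y) a +
              (f : G → G → D) (QuotientGroup.mk y : G ⧸ A).out (n y * a))) := by abel
      rw [sub_eq_zero_of_eq hA2, sub_eq_zero_of_eq hc, add_zero] at comb
      exact sub_eq_zero.mp comb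
    set g : G → G → D := fun x y =>
      (f : G → G → D) x y - (φ x + φ y - φ (x * y)) with hg_def
    have hgr : ∀ (x y a : G), a ∈ A → g x (y * a) = g x y := by
      intro x y a ha
      show (f : G → G → D) x (y * a) - (φ x + φ (y * a) - φ (x * (y * a))) = _
      rw [hstar y a ha, show x * (y * a) = x * y * a from (mul_assoc x y a).symm,
        hstar (x * y) a ha]
      have h1 := f.2 x y a
      have comb : ((f : G → G → D) x (y * a) -
          (φ x + (φ y + φ₀ a - (f : G → G → D) y a) -
            (φ (x * y) + φ₀ a - (f : G → G → D) (x * y) a))) -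
          ((f : G → G → D) x y - (φ x + φ y - φ (x * y))) =
          -(((f : G → G → D) x y + (f : G → G → D) (x * y) a) -
            ((f : G → G → D) y a + (f : G → G → D) x (y * a))) := by abel
      rw [sub_eq_zero_of_eq h1, neg_zero] at comb
      exact sub_eq_zero.mp comb
    have hgl : ∀ (x y a : G), a ∈ A → g (x * a) y = g x y := by
      intro x y a ha
      have hxy : x * a * y = x * y * a := by
        rw [mul_assoc, hA a ha y, ← mul_assoc]
      show (f : G → G → D) (x * a) y - (φ (x * a) + φ y - φ (x * a * y)) = _
      rw [hstar x a ha, hxy, hstar (x * y) a ha,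
        show x * a = a * x from (hA a ha x).symm]
      have h2 := f.2 a x y
      have s1 : (f : G → G → D) x a = (f : G → G → D) a x := hsymm x a ha
      have s2 : (f : G → G → D) (x * y) a = (f : G → G → D) a (x * y) := hsymm (x * y) a ha
      have comb : ((f : G → G → D) (a * x) y -
          ((φ x + φ₀ a - (f : G → G → D) x a) + φ y -
            (φ (x * y) + φ₀ a - (f : G → G → D) (x * y) a))) -
          ((f : G → G → D) x y - (φ x + φ y - φ (x * y))) =
          (((f : G → G → D) a x + (f : G → G → D) (a * x) y) -
           ((f : G → G → D) x y + (f : G → G → D) a (x * y))) +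
          ((f : G → G → D) x a - (f : G → G → D) a x) -
          ((f : G → G → D) (x * y) a - (f : G → G → D) a (x * y)) := by abel
      rw [sub_eq_zero_of_eq h2, sub_eq_zero_of_eq s1, sub_eq_zero_of_eq s2] at comb
      simp only [add_zero, zero_add, sub_zero, zero_sub, neg_zero] at comb
      exact sub_eq_zero.mp comb
    have hgout : ∀ x y : G, g x y =
        g (QuotientGroup.mk x : G ⧸ A).out (QuotientGroup.mk y : G ⧸ A).out := by
      intro x y
      conv_lhs => rw [← hxn x, ← hxn y]
      rw [hgl _ _ _ (hnA x), hgr _ _ _ (hnA y)]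
    have hgmk : ∀ {x x' y y' : G}, (QuotientGroup.mk x : G ⧸ A) = QuotientGroup.mk x' →
        (QuotientGroup.mk y : G ⧸ A) = QuotientGroup.mk y' → g x y = g x' y' := by
      intro x x' y y' hx hy
      rw [hgout x y, hgout x' y', hx, hy]
    have hgcoc : ∀ x y z : G, g x y + g (x * y) z = g y z + g x (y * z) := by
      intro x y z
      show (f : G → G → D) x y - (φ x + φ y - φ (x * y)) +
          ((f : G → G → D) (x * y) z - (φ (x * y) + φ z - φ (x * y * z))) =
          (f : G → G → D) y z - (φ y + φ z - φ (y * z)) +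
          ((f : G → G → D) x (y * z) - (φ x + φ (y * z) - φ (x * (y * z))))
      rw [show x * (y * z) = x * y * z from (mul_assoc x y z).symm]
      have h1 := f.2 x y z
      have comb : ((f : G → G → D) x y - (φ x + φ y - φ (x * y)) +
          ((f : G → G → D) (x * y) z - (φ (x * y) + φ z - φ (x * y * z)))) -
          ((f : G → G → D) y z - (φ y + φ z - φ (y * z)) +
          ((f : G → G → D) x (y * z) - (φ x + φ (y * z) - φ (x * y * z)))) =
          (((f : G → G → D) x y + (f : G → G → D) (x * y) z) -
           ((f : G → G → D) y z + (f : G → G → D) x (y * z))) := by abel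
      rw [sub_eq_zero_of_eq h1] at comb
      exact sub_eq_zero.mp comb
    refine ⟨H2mk ⟨fun u v => g u.out v.out, ?_⟩, ?_⟩
    · intro u v w
      have e1 : g (u * v).out w.out = g (u.out * v.out) w.out :=
        hgmk (by rw [hout, QuotientGroup.mk_mul, hout, hout]) rfl
      have e2 : g u.out (v * w).out = g u.out (v.out * w.out) :=
        hgmk rfl (by rw [hout, QuotientGroup.mk_mul, hout, hout])
      show g u.out v.out + g (u * v).out w.out = g v.out w.out + g u.out (v * w).out
      rw [e1, e2]
      exact hgcoc _ _ _
    · rw [H2Map_mk, H2mk_eq_iff]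
      refine ⟨fun x => -(φ x), ?_⟩
      intro x y
      have hpull : (f : G → G → D) x y -
          g (QuotientGroup.mk x : G ⧸ A).out (QuotientGroup.mk y : G ⧸ A).out =
          φ x + φ y - φ (x * y) := by
        rw [← hgout x y]
        show (f : G → G → D) x y -
          ((f : G → G → D) x y - (φ x + φ y - φ (x * y))) = _
        abel
      show g (QuotientGroup.mk x : G ⧸ A).out (QuotientGroup.mk y : G ⧸ A).out -
        (f : G → G → D) x y = -(φ x) + -(φ y) - -(φ (x * y))
      rw [← neg_sub ((f : G → G → D) x y), hpull]
      abel

/-- Assume `Z = 1`, let `θ'(ξ) = (ξ₁, ξ₂, t)` and suppose `ξ₁` restricts trivially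
to `A` or `ξ₂` restricts trivially to `A`.  Then the following are equivalent:
(i) `ξ` is inflated from `G/A`; (ii) `t` vanishes on `H ⊗ A` and on `A ⊗ K`;
(iii) `ψ_A(ξ₁) = 0` and `ψ_A(ξ₂) = 0`, where `ψ_A(η)(x ⊗ a) = f(x,a) - f(a,x)` for a
(equivalently, any) 2-cocycle `f` representing `η`. -/
theorem inflation_image_tfae {G : Type} [Group G] (H K : Subgroup G) [H.Normal] [K.Normal]
    (hprod : H ⊔ K = ⊤) (hcomm : ∀ h ∈ H, ∀ k ∈ K, Commute h k)
    (D : Type) [AddCommGroup D] [DivisibleBy D ℤ]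
    [(H ⊓ K).Normal]
    (hZ : ⁅H, H⁆ ⊓ ⁅K, K⁆ = ⊥)
    (ν : H2 G D →+ (AbTensor ↥H ↥K →+ D))
    (hν : ∀ f : cocycles2 G D, ∀ (h : ↥H) (k : ↥K),
      ν (H2mk f) (tmulAb h k) = (f : G → G → D) ↑h ↑k - (f : G → G → D) ↑k ↑h)
    (ξ : H2 G D)
    (hres : H2Map ((H ⊓ K).subgroupOf H).subtype (H2Map H.subtype ξ) = 0 ∨
            H2Map ((H ⊓ K).subgroupOf K).subtype (H2Map K.subtype ξ) = 0) :
    ((ξ ∈ Set.range (H2Map (QuotientGroup.mk' (H ⊓ K)) : H2 (G ⧸ (H ⊓ K)) D →+ H2 G D)) ↔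
      ((∀ (h : ↥H) (a : ↥(H ⊓ K)),
          ν ξ (tmulAb h (Subgroup.inclusion inf_le_right a)) = 0) ∧
       (∀ (k : ↥K) (a : ↥(H ⊓ K)),
          ν ξ (tmulAb (Subgroup.inclusion inf_le_left a) k) = 0))) ∧
    (((∀ (h : ↥H) (a : ↥(H ⊓ K)),
          ν ξ (tmulAb h (Subgroup.inclusion inf_le_right a)) = 0) ∧
       (∀ (k : ↥K) (a : ↥(H ⊓ K)),
          ν ξ (tmulAb (Subgroup.inclusion inf_le_left a) k) = 0)) ↔
      ((∀ f : cocycles2 ↥H D, H2mk f = H2Map H.subtype ξ →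
          ∀ (x : ↥H) (a : ↥(H ⊓ K)),
            (f : ↥H → ↥H → D) x (Subgroup.inclusion inf_le_left a) =
            (f : ↥H → ↥H → D) (Subgroup.inclusion inf_le_left a) x) ∧
       (∀ f : cocycles2 ↥K D, H2mk f = H2Map K.subtype ξ →
          ∀ (y : ↥K) (a : ↥(H ⊓ K)),
            (f : ↥K → ↥K → D) y (Subgroup.inclusion inf_le_right a) =
            (f : ↥K → ↥K → D) (Subgroup.inclusion inf_le_right a) y))) := by
  classical
  obtain ⟨f, hf⟩ := QuotientAddGroup.mk_surjective ξ
  subst hf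
  have hAc : ∀ a ∈ H ⊓ K, ∀ g : G, a * g = g * a := by
    intro a ha g
    have hg : g ∈ (H : Set G) * (K : Set G) := by
      rw [← Subgroup.mul_normal, hprod]
      exact Subgroup.mem_top g
    obtain ⟨h, hh, k, hk, rfl⟩ := hg
    exact (((hcomm h hh a ha.2).symm).mul_right (hcomm a ha.1 k hk)).eq
  have hresA : ∃ φ₀ : G → D, ∀ a ∈ H ⊓ K, ∀ b ∈ H ⊓ K,
      (f : G → G → D) a b = φ₀ a + φ₀ b - φ₀ (a * b) := by
    rcases hres with h1 | h1
    · rw [H2Map_mk, H2Map_mk, H2mk_eq_zero_iff] at h1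
      obtain ⟨φ, hφ⟩ := h1
      refine ⟨fun x => if hx : x ∈ H ⊓ K then
        φ ⟨⟨x, hx.1⟩, Subgroup.mem_subgroupOf.mpr hx⟩ else 0, ?_⟩
      intro a ha b hb
      simp only [dif_pos ha, dif_pos hb, dif_pos (mul_mem ha hb)]
      exact hφ ⟨⟨a, ha.1⟩, Subgroup.mem_subgroupOf.mpr ha⟩
        ⟨⟨b, hb.1⟩, Subgroup.mem_subgroupOf.mpr hb⟩
    · rw [H2Map_mk, H2Map_mk, H2mk_eq_zero_iff] at h1
      obtain ⟨φ, hφ⟩ := h1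
      refine ⟨fun x => if hx : x ∈ H ⊓ K then
        φ ⟨⟨x, hx.2⟩, Subgroup.mem_subgroupOf.mpr hx⟩ else 0, ?_⟩
      intro a ha b hb
      simp only [dif_pos ha, dif_pos hb, dif_pos (mul_mem ha hb)]
      exact hφ ⟨⟨a, ha.2⟩, Subgroup.mem_subgroupOf.mpr ha⟩
        ⟨⟨b, hb.2⟩, Subgroup.mem_subgroupOf.mpr hb⟩
  -- From condition (ii), symmetry of f on all of G against A.
  have bridge : ((∀ (h : ↥H) (a : ↥(H ⊓ K)),
          ν (H2mk f) (tmulAb h (Subgroup.inclusion inf_le_right a)) = 0) ∧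
       (∀ (k : ↥K) (a : ↥(H ⊓ K)),
          ν (H2mk f) (tmulAb (Subgroup.inclusion inf_le_left a) k) = 0)) →
      ∀ g : G, ∀ a ∈ H ⊓ K, (f : G → G → D) g a = (f : G → G → D) a g := by
    rintro ⟨c1, c2⟩ g a ha
    have hg : g ∈ (H : Set G) * (K : Set G) := by
      rw [← Subgroup.mul_normal, hprod]
      exact Subgroup.mem_top g
    obtain ⟨h, hh, k, hk, rfl⟩ := hg
    have shh : (f : G → G → D) h a = (f : G → G → D) a h := by
      have h0 := hν f ⟨h, hh⟩ (Subgroup.inclusion inf_le_right ⟨a, ha⟩)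
      rw [c1 ⟨h, hh⟩ ⟨a, ha⟩] at h0
      exact sub_eq_zero.mp h0.symm
    have skk : (f : G → G → D) k a = (f : G → G → D) a k := by
      have h0 := hν f (Subgroup.inclusion inf_le_left ⟨a, ha⟩) ⟨k, hk⟩
      rw [c2 ⟨k, hk⟩ ⟨a, ha⟩] at h0
      exact (sub_eq_zero.mp h0.symm).symm
    have lam := lambda_mul f (fun g' => hAc a ha g') h k
    rw [sub_eq_zero_of_eq shh, sub_eq_zero_of_eq skk, add_zero] at lam
    exact sub_eq_zero.mp lam
  constructor
  · -- (i) ↔ (ii)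
    constructor
    · intro hi
      obtain ⟨-, hsym⟩ := (infl_iff (H ⊓ K) hAc f).mp hi
      constructor
      · intro x a
        rw [hν f x (Subgroup.inclusion inf_le_right a)]
        exact sub_eq_zero_of_eq (hsym ↑x ↑a a.2)
      · intro y a
        rw [hν f (Subgroup.inclusion inf_le_left a) y]
        exact sub_eq_zero_of_eq (hsym ↑y ↑a a.2).symm
    · intro hii
      exact (infl_iff (H ⊓ K) hAc f).mpr ⟨hresA, bridge hii⟩
  · -- (ii) ↔ (iii)
    constructor
    · rintro ⟨c1, c2⟩
      constructor
      · intro f' hf' x a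
        have sxa : (f : G → G → D) ↑x ↑a = (f : G → G → D) ↑a ↑x := by
          have h0 := hν f x (Subgroup.inclusion inf_le_right a)
          rw [c1 x a] at h0
          exact sub_eq_zero.mp h0.symm
        rw [H2Map_mk, H2mk_eq_iff] at hf'
        obtain ⟨φ, hφ⟩ := hf'
        set ia := Subgroup.inclusion (inf_le_left : H ⊓ K ≤ H) a with hia
        have hcm : x * ia = ia * x := Subtype.ext (by
          simp only [Subgroup.coe_mul, Subgroup.coe_inclusion]
          exact (hAc ↑a a.2 ↑x).symm)
        have d1 := hφ x ia
        have d2 := hφ ia x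
        rw [← hcm] at d2
        have e : ((pullCocycle H.subtype f : cocycles2 ↥H D) : ↥H → ↥H → D) x ia -
            ((pullCocycle H.subtype f : cocycles2 ↥H D) : ↥H → ↥H → D) ia x = 0 :=
          sub_eq_zero_of_eq sxa
        have comb : (f' : ↥H → ↥H → D) x ia - (f' : ↥H → ↥H → D) ia x =
            (((f' : ↥H → ↥H → D) x ia -
               ((pullCocycle H.subtype f : cocycles2 ↥H D) : ↥H → ↥H → D) x ia) -
             ((f' : ↥H → ↥H → D) ia x -
               ((pullCocycle H.subtype f : cocycles2 ↥H D) : ↥H → ↥H → D) ia x)) +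
            (((pullCocycle H.subtype f : cocycles2 ↥H D) : ↥H → ↥H → D) x ia -
             ((pullCocycle H.subtype f : cocycles2 ↥H D) : ↥H → ↥H → D) ia x) := by abel
        rw [d1, d2, e, add_zero] at comb
        exact sub_eq_zero.mp (comb.trans (by abel))
      · intro f' hf' y a
        have sxa : (f : G → G → D) ↑y ↑a = (f : G → G → D) ↑a ↑y := by
          have h0 := hν f (Subgroup.inclusion inf_le_left a) y
          rw [c2 y a] at h0
          exact (sub_eq_zero.mp h0.symm).symm
        rw [H2Map_mk, H2mk_eq_iff] at hf'
        obtain ⟨φ, hφ⟩ := hf'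
        set ia := Subgroup.inclusion (inf_le_right : H ⊓ K ≤ K) a with hia
        have hcm : y * ia = ia * y := Subtype.ext (by
          simp only [Subgroup.coe_mul, Subgroup.coe_inclusion]
          exact (hAc ↑a a.2 ↑y).symm)
        have d1 := hφ y ia
        have d2 := hφ ia y
        rw [← hcm] at d2
        have e : ((pullCocycle K.subtype f : cocycles2 ↥K D) : ↥K → ↥K → D) y ia -
            ((pullCocycle K.subtype f : cocycles2 ↥K D) : ↥K → ↥K → D) ia y = 0 :=
          sub_eq_zero_of_eq sxa
        have comb : (f' : ↥K → ↥K → D) y ia - (f' : ↥K → ↥K → D) ia y =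
            (((f' : ↥K → ↥K → D) y ia -
               ((pullCocycle K.subtype f : cocycles2 ↥K D) : ↥K → ↥K → D) y ia) -
             ((f' : ↥K → ↥K → D) ia y -
               ((pullCocycle K.subtype f : cocycles2 ↥K D) : ↥K → ↥K → D) ia y)) +
            (((pullCocycle K.subtype f : cocycles2 ↥K D) : ↥K → ↥K → D) y ia -
             ((pullCocycle K.subtype f : cocycles2 ↥K D) : ↥K → ↥K → D) ia y) := by abel
        rw [d1, d2, e, add_zero] at comb
        exact sub_eq_zero.mp (comb.trans (by abel))
    · rintro ⟨c1, c2⟩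
      constructor
      · intro x a
        rw [hν f x (Subgroup.inclusion inf_le_right a)]
        have := c1 (pullCocycle H.subtype f) (H2Map_mk H.subtype f).symm x a
        exact sub_eq_zero_of_eq this
      · intro y a
        rw [hν f (Subgroup.inclusion inf_le_left a) y]
        have := c2 (pullCocycle K.subtype f) (H2Map_mk K.subtype f).symm y a
        exact sub_eq_zero_of_eq this.symm


end SchurCP
end

section
/- The sequence 1 → Z → (A ∩ [H,H]) × (A ∩ [K,K]) → A ∩ [G,G] → 1 is exact, where the first map sends z to (z, z⁻¹) and the second sends (x, y) to xy. In particular, A ∩ [G,G] = (A ∩ [H,H])(A ∩ [K,K]), and the kernel of the multiplication map (A ∩ [H,H]) × (A ∩ [K,K]) → A ∩ [G,G] is {(z, z⁻¹) : z ∈ Z}. -/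
/-!
Setting (central products): `G` is a group with normal subgroups `H` and `K` such that
`G = HK` (i.e. `H ⊔ K = ⊤`) and `[H, K] = 1` (i.e. every element of `H` commutes with
every element of `K`).  We set `A = H ⊓ K` and `Z = ⁅H,H⁆ ⊓ ⁅K,K⁆`; both are central
in `G`.  Coefficients are taken in a divisible abelian group `D`, regarded as a trivial
module.  Second cohomology `H2 X D` is realized concretely as (inhomogeneous)
2-cocycles modulo 2-coboundaries, and `Hom(X, D)` is realized as `Additive X →+ D`.
-/

open scoped TensorProduct

set_option maxHeartbeats 1000000
set_option synthInstance.maxHeartbeats 1000000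
set_option synthInstance.maxSize 2000

namespace SchurCP

variable (G : Type) [Group G] (D : Type) [AddCommGroup D]

variable {G D}

open scoped commutatorElement in
theorem key_comm {G : Type} [Group G] (H K : Subgroup G)
    (hcomm : ∀ h ∈ H, ∀ k ∈ K, Commute h k)
    (h₁ k₁ h₂ k₂ : G) (hh₁ : h₁ ∈ H) (hk₁ : k₁ ∈ K) (hh₂ : h₂ ∈ H) (hk₂ : k₂ ∈ K) :
    ⁅h₁ * k₁, h₂ * k₂⁆ = ⁅h₁, h₂⁆ * ⁅k₁, k₂⁆ := by
  let φ : H × K →* G := MonoidHom.noncommCoprod H.subtype K.subtype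
    (fun h k => hcomm h h.2 k k.2)
  let a : H × K := (⟨h₁, hh₁⟩, ⟨k₁, hk₁⟩)
  let b : H × K := (⟨h₂, hh₂⟩, ⟨k₂, hk₂⟩)
  have h1 : φ ⁅a, b⁆ = ⁅h₁ * k₁, h₂ * k₂⁆ := by
    rw [map_commutatorElement]; rfl
  have h2 : ⁅a, b⁆ = (⁅a.1, b.1⁆, ⁅a.2, b.2⁆) := rfl
  rw [← h1, h2]
  rfl

open scoped commutatorElement in
theorem commutator_le_sup {G : Type} [Group G] (H K : Subgroup G)
    [H.Normal] [K.Normal]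
    (hprod : H ⊔ K = ⊤) (hcomm : ∀ h ∈ H, ∀ k ∈ K, Commute h k) :
    commutator G ≤ ⁅H, H⁆ ⊔ ⁅K, K⁆ := by
  rw [commutator, Subgroup.commutator_le]
  intro g₁ _ g₂ _
  have hg₁ : g₁ ∈ H ⊔ K := by rw [hprod]; trivial
  have hg₂ : g₂ ∈ H ⊔ K := by rw [hprod]; trivial
  rw [← SetLike.mem_coe, Subgroup.mul_normal] at hg₁ hg₂
  obtain ⟨h₁, hh₁, k₁, hk₁, rfl⟩ := hg₁
  obtain ⟨h₂, hh₂, k₂, hk₂, rfl⟩ := hg₂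
  rw [key_comm H K hcomm h₁ k₁ h₂ k₂ hh₁ hk₁ hh₂ hk₂]
  exact mul_mem (Subgroup.mem_sup_left (Subgroup.commutator_mem_commutator hh₁ hh₂))
    (Subgroup.mem_sup_right (Subgroup.commutator_mem_commutator hk₁ hk₂))

/-- The sequence `1 → Z → (A ∩ [H,H]) × (A ∩ [K,K]) → A ∩ [G,G] → 1`, with
`z ↦ (z, z⁻¹)` and `(x, y) ↦ xy`, is exact.  In particular
`A ∩ [G,G] = (A ∩ [H,H])(A ∩ [K,K])` and the kernel of the multiplication map is
`{(z, z⁻¹) : z ∈ Z}`. -/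
theorem exact_sequence_A_inter_commutators {G : Type} [Group G] (H K : Subgroup G)
    [H.Normal] [K.Normal]
    (hprod : H ⊔ K = ⊤) (hcomm : ∀ h ∈ H, ∀ k ∈ K, Commute h k) :
    (∀ z ∈ ⁅H, H⁆ ⊓ ⁅K, K⁆, z ∈ H ⊓ K ⊓ ⁅H, H⁆ ∧ z⁻¹ ∈ H ⊓ K ⊓ ⁅K, K⁆) ∧
    (∀ x ∈ H ⊓ K ⊓ ⁅H, H⁆, ∀ y ∈ H ⊓ K ⊓ ⁅K, K⁆, x * y ∈ H ⊓ K ⊓ commutator G) ∧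
    (∀ g ∈ H ⊓ K ⊓ commutator G,
      ∃ x ∈ H ⊓ K ⊓ ⁅H, H⁆, ∃ y ∈ H ⊓ K ⊓ ⁅K, K⁆, x * y = g) ∧
    (∀ x ∈ H ⊓ K ⊓ ⁅H, H⁆, ∀ y ∈ H ⊓ K ⊓ ⁅K, K⁆,
      (x * y = 1 ↔ x ∈ ⁅H, H⁆ ⊓ ⁅K, K⁆ ∧ y = x⁻¹)) := by
  refine ⟨?_, ?_, ?_, ?_⟩
  · rintro z ⟨hzH, hzK⟩
    exact ⟨⟨⟨commutator_le_self H hzH, commutator_le_self K hzK⟩, hzH⟩,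
      ⟨⟨(H ⊓ K).inv_mem ⟨commutator_le_self H hzH, commutator_le_self K hzK⟩ |>.1,
        (H ⊓ K).inv_mem ⟨commutator_le_self H hzH, commutator_le_self K hzK⟩ |>.2⟩,
        ⁅K, K⁆.inv_mem hzK⟩⟩
  · rintro x ⟨hxA, hxH⟩ y ⟨hyA, hyK⟩
    refine ⟨(H ⊓ K).mul_mem hxA hyA, mul_mem ?_ ?_⟩
    · exact Subgroup.commutator_mono le_top le_top hxH
    · exact Subgroup.commutator_mono le_top le_top hyK
  · rintro g ⟨hgA, hgC⟩
    have hg : g ∈ ⁅H, H⁆ ⊔ ⁅K, K⁆ := commutator_le_sup H K hprod hcomm hgC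
    rw [← SetLike.mem_coe, Subgroup.mul_normal] at hg
    obtain ⟨x, hx, y, hy, rfl⟩ := hg
    have hxH : x ∈ H := commutator_le_self H hx
    have hyK : y ∈ K := commutator_le_self K hy
    have hyH : y ∈ H := by
      have : y = x⁻¹ * (x * y) := by group
      rw [this]; exact H.mul_mem (H.inv_mem hxH) hgA.1
    have hxK : x ∈ K := by
      have : x = (x * y) * y⁻¹ := by group
      rw [this]; exact K.mul_mem hgA.2 (K.inv_mem hyK)
    exact ⟨x, ⟨⟨hxH, hxK⟩, hx⟩, y, ⟨⟨hyH, hyK⟩, hy⟩, rfl⟩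
  · rintro x ⟨hxA, hxH⟩ y ⟨hyA, hyK⟩
    constructor
    · intro hxy
      have hyx : y = x⁻¹ := by
        rw [← mul_left_cancel_iff (a := x), hxy, mul_inv_cancel]
      refine ⟨⟨hxH, ?_⟩, hyx⟩
      rw [hyx] at hyK
      simpa using ⁅K, K⁆.inv_mem hyK
    · rintro ⟨-, rfl⟩
      exact mul_inv_cancel x

end SchurCP
end
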